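/- arXiv:1702.04631 — 9 statements merged into one kernel-verified Lean document; each statement's English description precedes it below -/
import Mathlib

section
/- For every natural number N ≥ 1, in the formal power series ring over the polynomial ring ℤ[y], the coefficient of x^N in the finite product ∏_{n=1}^{N} (1 − y·x^n)⁻¹ equals the polynomial Σ_{k=1}^{N} λ(N|k)·y^k. -/
open PowerSeries Finset

noncomputable def geomY (n : ℕ) : PowerSeries (Polynomial ℤ) :=
  PowerSeries.mk fun m => if n ∣ m then Polynomial.X ^ (m / n) else 0

lemma geomY_mul (n : ℕ) (hn : 1 ≤ n) :
    (1 - PowerSeries.C (R := Polynomial ℤ) Polynomial.X * PowerSeries.X ^ n) * geomY n = 1 := by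
  have : geomY n = 1 + PowerSeries.C (R := Polynomial ℤ) Polynomial.X * PowerSeries.X ^ n * geomY n := by
    ext m
    rw [map_add]
    rcases Nat.lt_or_ge m n with h | h
    · have h2 : coeff (R := Polynomial ℤ) m (PowerSeries.C (R := Polynomial ℤ) Polynomial.X * PowerSeries.X ^ n * geomY n) = 0 := by
        rw [mul_assoc, coeff_C_mul, coeff_X_pow_mul' ]
        simp [Nat.not_le_of_lt h]
      rw [h2, add_zero]
      rcases Nat.eq_zero_or_pos m with rfl | hm
      · simp [geomY]
      · have : ¬ n ∣ m := fun hd => absurd (Nat.le_of_dvd hm hd) (Nat.not_le_of_lt h)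
        simp [geomY, this, coeff_one, Nat.pos_iff_ne_zero.mp hm]
    · obtain ⟨d, rfl⟩ := Nat.exists_eq_add_of_le h
      have h2 : coeff (R := Polynomial ℤ) (n + d) (PowerSeries.C (R := Polynomial ℤ) Polynomial.X * PowerSeries.X ^ n * geomY n) = Polynomial.X * coeff (R := Polynomial ℤ) d (geomY n) := by
        rw [mul_assoc, coeff_C_mul, add_comm n d, coeff_X_pow_mul]
      rw [h2]
      have hne : n + d ≠ 0 := by omega
      rw [coeff_one, if_neg hne, zero_add]
      simp only [geomY, coeff_mk]
      by_cases hd : n ∣ d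
      · have : n ∣ n + d := Dvd.dvd.add (dvd_refl n) hd
        rw [if_pos this, if_pos hd, ← pow_succ']
        congr 1
        obtain ⟨c, rfl⟩ := hd
        rw [Nat.mul_div_cancel_left c (by omega)]
        have : n + n * c = n * (c + 1) := by ring
        rw [this, Nat.mul_div_cancel_left _ (by omega)]
      · have : ¬ n ∣ n + d := fun hd2 => hd ((Nat.dvd_add_right (dvd_refl n)).mp hd2)
        rw [if_neg this, if_neg hd, mul_zero]
  calc (1 - PowerSeries.C (R := Polynomial ℤ) Polynomial.X * PowerSeries.X ^ n) * geomY n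
      = geomY n - PowerSeries.C (R := Polynomial ℤ) Polynomial.X * PowerSeries.X ^ n * geomY n := by ring
    _ = 1 := by nth_rewrite 1 [this]; ring

lemma invOfUnit_eq_geomY (n : ℕ) (hn : 1 ≤ n) :
    PowerSeries.invOfUnit
      (1 - PowerSeries.C (R := Polynomial ℤ) Polynomial.X * PowerSeries.X ^ n) 1 = geomY n := by
  set φ := 1 - PowerSeries.C (R := Polynomial ℤ) Polynomial.X * PowerSeries.X ^ n with hφ
  have hc : constantCoeff (R := Polynomial ℤ) φ = (1 : (Polynomial ℤ)ˣ) := by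
    simp only [hφ, ← coeff_zero_eq_constantCoeff, map_sub, map_one, coeff_C_mul, coeff_X_pow]
    rw [if_neg (by omega)]
    simp
  have h1 : φ * PowerSeries.invOfUnit φ 1 = 1 := PowerSeries.mul_invOfUnit φ 1 hc
  have h2 : φ * geomY n = 1 := geomY_mul n hn
  calc PowerSeries.invOfUnit φ 1 = PowerSeries.invOfUnit φ 1 * (φ * geomY n) := by rw [h2, mul_one]
    _ = (φ * PowerSeries.invOfUnit φ 1) * geomY n := by ring
    _ = geomY n := by rw [h1, one_mul]

lemma parts_mem_Icc {N : ℕ} (P : Nat.Partition N) {j : ℕ} (hj : j ∈ P.parts) :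
    j ∈ Finset.Icc 1 N := by
  rw [Finset.mem_Icc]
  refine ⟨P.parts_pos hj, ?_⟩
  conv_rhs => rw [← P.parts_sum]
  exact Multiset.le_sum_of_mem hj

/-- partition associated to a divisibility-respecting finsupp in the antidiagonal -/
noncomputable def partOf (N : ℕ) (f : ℕ →₀ ℕ)
    (h1 : (Finset.Icc 1 N).sum f = N) (h2 : ∀ n ∈ Finset.Icc 1 N, n ∣ f n) :
    Nat.Partition N where
  parts := ∑ n ∈ Finset.Icc 1 N, Multiset.replicate (f n / n) n
  parts_pos := by
    intro i hi
    rw [Multiset.mem_sum] at hi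
    obtain ⟨n, hn, hi⟩ := hi
    rw [Multiset.eq_of_mem_replicate hi]
    exact (Finset.mem_Icc.mp hn).1
  parts_sum := by
    simp_rw [Multiset.sum_sum, Multiset.sum_replicate, Nat.nsmul_eq_mul]
    rw [Finset.sum_congr rfl fun n hn =>
      Nat.div_mul_cancel (h2 n hn)]
    exact h1

/-- finsupp associated to a partition -/
noncomputable def fOf (N : ℕ) (P : Nat.Partition N) : ℕ →₀ ℕ :=
  ⟨P.parts.toFinset, fun n => P.parts.count n * n, by
    intro n
    simp only [Multiset.mem_toFinset, ne_eq, mul_eq_zero, Multiset.count_eq_zero, not_or]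
    constructor
    · intro h
      exact ⟨by simpa using h, by have := Finset.mem_Icc.mp (parts_mem_Icc _ h); omega⟩
    · intro h; simpa using h.1⟩

theorem coeff_prod_invOfUnit_eq_sum_restrictedPartitionCount' (N : ℕ) (hN : 1 ≤ N) :
    PowerSeries.coeff (R := Polynomial ℤ) N
      (∏ n ∈ Finset.Icc 1 N,
        PowerSeries.invOfUnit
          (1 - PowerSeries.C (R := Polynomial ℤ) Polynomial.X * PowerSeries.X ^ n) 1)
      = ∑ P : Nat.Partition N, Polynomial.X ^ P.parts.card := by
  rw [Finset.prod_congr rfl fun n hn => invOfUnit_eq_geomY n (Finset.mem_Icc.mp hn).1]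
  rw [PowerSeries.coeff_prod]
  have step1 : ∑ f ∈ Finset.finsuppAntidiag (Finset.Icc 1 N) N,
      ∏ n ∈ Finset.Icc 1 N, PowerSeries.coeff (R := Polynomial ℤ) (f n) (geomY n)
      = ∑ f ∈ (Finset.finsuppAntidiag (Finset.Icc 1 N) N).filter
          (fun f : ℕ →₀ ℕ => ∀ n ∈ Finset.Icc 1 N, n ∣ f n),
        (Polynomial.X : Polynomial ℤ) ^ (∑ n ∈ Finset.Icc 1 N, f n / n) := by
    rw [Finset.sum_filter]
    refine Finset.sum_congr rfl fun f _ => ?_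
    simp only [geomY, coeff_mk]
    split_ifs with h
    · rw [Finset.prod_congr rfl fun n hn => if_pos (h n hn), Finset.prod_pow_eq_pow_sum]
    · push_neg at h
      obtain ⟨n, hn, hnd⟩ := h
      exact Finset.prod_eq_zero hn (if_neg hnd)
  rw [step1]
  refine Finset.sum_bij' (fun f hf => partOf N f
      ((Finset.mem_finsuppAntidiag.mp (Finset.mem_filter.mp hf).1).1)
      ((Finset.mem_filter.mp hf).2)) (fun P _ => fOf N P) ?_ ?_ ?_ ?_ ?_
  · intro f hf; exact Finset.mem_univ _
  · -- fOf lands in the filtered antidiagonal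
    intro P _
    simp only [Finset.mem_filter, Finset.mem_finsuppAntidiag]
    refine ⟨⟨?_, ?_⟩, ?_⟩
    · -- sum condition
      conv_rhs => rw [← P.parts_sum]
      rw [Finset.sum_multiset_count_of_subset P.parts (Finset.Icc 1 N)
        (fun i hi => parts_mem_Icc P (Multiset.mem_toFinset.mp hi))]
      simp [fOf, smul_eq_mul]
    · -- support condition
      intro n hn
      exact parts_mem_Icc P (Multiset.mem_toFinset.mp hn)
    · -- divisibility
      intro n _
      exact Dvd.intro_left _ rfl
  · -- left inverse
    intro f hf
    rw [Finset.mem_filter, Finset.mem_finsuppAntidiag] at hf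
    ext n
    show Multiset.count n (∑ m ∈ Finset.Icc 1 N, Multiset.replicate (f m / m) m) * n = f n
    simp_rw [Multiset.count_sum', Multiset.count_replicate, Finset.sum_ite_eq']
    split_ifs with h
    · exact Nat.div_mul_cancel (hf.2 n h)
    · rw [zero_mul]
      symm
      rw [← Finsupp.notMem_support_iff]
      exact fun hc => h (hf.1.2 hc)
  · -- right inverse
    intro P _
    apply Nat.Partition.ext
    show (∑ n ∈ Finset.Icc 1 N, Multiset.replicate (P.parts.count n * n / n) n) = P.parts
    ext i
    simp_rw [Multiset.count_sum', Multiset.count_replicate, Finset.sum_ite_eq']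
    split_ifs with h
    · rw [Nat.mul_div_cancel _ (Finset.mem_Icc.mp h).1]
    · symm
      rw [Multiset.count_eq_zero]
      exact fun hc => h (parts_mem_Icc P hc)
  · -- weights agree
    intro f hf
    congr 1
    show _ = Multiset.card (∑ n ∈ Finset.Icc 1 N, Multiset.replicate (f n / n) n)
    rw [Multiset.card_sum]
    simp

/-- `restrictedPartitionCount N k` is λ(N|k), the number of partitions of `N`
into exactly `k` parts. -/
def restrictedPartitionCount (N k : ℕ) : ℕ :=
  (Finset.univ.filter fun P : Nat.Partition N => P.parts.card = k).card

/-- The coefficient of `x^N` in `∏_{n=1}^{N} (1 - y xⁿ)⁻¹`, computed in the ring of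
formal power series in `x` over `ℤ[y]`, equals `Σ_{k=1}^{N} λ(N|k) y^k`. -/
theorem coeff_prod_invOfUnit_eq_sum_restrictedPartitionCount (N : ℕ) (hN : 1 ≤ N) :
    PowerSeries.coeff (R := Polynomial ℤ) N
      (∏ n ∈ Finset.Icc 1 N,
        PowerSeries.invOfUnit
          (1 - PowerSeries.C (R := Polynomial ℤ) Polynomial.X * PowerSeries.X ^ n) 1)
      = ∑ k ∈ Finset.Icc 1 N,
          (restrictedPartitionCount N k : Polynomial ℤ) * Polynomial.X ^ k := by
  rw [coeff_prod_invOfUnit_eq_sum_restrictedPartitionCount' N hN]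
  have hmaps : ∀ P : Nat.Partition N, P ∈ (Finset.univ : Finset (Nat.Partition N)) →
      P.parts.card ∈ Finset.Icc 1 N := by
    intro P _
    rw [Finset.mem_Icc]
    constructor
    · by_contra h
      have hcard : Multiset.card P.parts = 0 := by omega
      have hz : P.parts = 0 := Multiset.card_eq_zero.mp hcard
      have hs := P.parts_sum
      rw [hz, Multiset.sum_zero] at hs
      omega
    · have h1 : Multiset.card P.parts • 1 ≤ P.parts.sum :=
        Multiset.card_nsmul_le_sum (fun x hx => P.parts_pos hx)
      simpa [P.parts_sum] using h1
  rw [← Finset.sum_fiberwise_of_maps_to hmaps (fun P => (Polynomial.X : Polynomial ℤ) ^ P.parts.card)]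
  refine Finset.sum_congr rfl fun k _ => ?_
  rw [Finset.sum_congr rfl (fun P hP => by rw [(Finset.mem_filter.mp hP).2])]
  rw [Finset.sum_const, nsmul_eq_mul]
  rfl
end

section
/- For every natural number N ≥ 1 and every M ≥ N, the coefficient of x^N in the finite product ∏_{n=1}^{M} (1 − x^n)⁻¹, taken in the formal power series ring ℤ⟦x⟧, equals λ(N), the total number of partitions of N. -/
open PowerSeries Finset
open scoped Classical

namespace PartitionAux

noncomputable section

variable {α : Type*}

/-- A convenience constructor for the power series whose coefficients indicate a subset. -/
def indicatorSeries (α : Type*) [Semiring α] (s : Set ℕ) : PowerSeries α :=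
  PowerSeries.mk fun n => if n ∈ s then 1 else 0

theorem coeff_indicator (s : Set ℕ) [Semiring α] (n : ℕ) :
    coeff (R := α) n (indicatorSeries _ s) = if n ∈ s then 1 else 0 :=
  coeff_mk _ _

theorem constantCoeff_indicator (s : Set ℕ) [Semiring α] :
    constantCoeff (R := α) (indicatorSeries _ s) = if 0 ∈ s then 1 else 0 :=
  rfl

-- The main workhorse (copied from Archive/Wiedijk100Theorems/Partition.lean).
theorem partialGF_prop (α : Type*) [CommSemiring α] (n : ℕ) (s : Finset ℕ) (hs : ∀ i ∈ s, 0 < i)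
    (c : ℕ → Set ℕ) (hc : ∀ i, i ∉ s → 0 ∈ c i) :
    #{p : n.Partition | (∀ j, p.parts.count j ∈ c j) ∧ ∀ j ∈ p.parts, j ∈ s} =
      coeff (R := α) n (∏ i ∈ s, indicatorSeries α ((· * i) '' c i)) := by
  simp_rw [coeff_prod, coeff_indicator, prod_boole, sum_boole]
  apply congr_arg
  simp only [mem_univ, forall_true_left, not_and, not_forall, exists_prop,
    Set.mem_image, not_exists]
  set φ : (a : Nat.Partition n) →
    a ∈ filter (fun p ↦ (∀ (j : ℕ), Multiset.count j p.parts ∈ c j) ∧ ∀ j ∈ p.parts, j ∈ s) univ →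
    ℕ →₀ ℕ := fun p _ => {
      toFun := fun i => Multiset.count i p.parts • i
      support := Finset.filter (fun i => i ≠ 0) p.parts.toFinset
      mem_support_toFun := fun a => by
        simp only [smul_eq_mul, ne_eq, mul_eq_zero, Multiset.count_eq_zero]
        rw [not_or, not_not]
        simp only [Multiset.mem_toFinset, not_not, mem_filter] }
  refine Finset.card_bij φ ?_ ?_ ?_
  · intro a ha
    simp only [φ, not_forall, not_exists, not_and, exists_prop, mem_filter]
    rw [mem_finsuppAntidiag]
    dsimp only [ne_eq, smul_eq_mul, id_eq, eq_mpr_eq_cast, le_eq_subset, Finsupp.coe_mk]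
    simp only [mem_univ, forall_true_left, not_and, not_forall, exists_prop,
      mem_filter, true_and] at ha
    refine ⟨⟨?_, fun i ↦ ?_⟩, fun i _ ↦ ⟨a.parts.count i, ha.1 i, rfl⟩⟩
    · conv_rhs => simp [← a.parts_sum]
      rw [sum_multiset_count_of_subset _ s]
      · simp only [smul_eq_mul]
      · intro i
        simp only [Multiset.mem_toFinset, not_not, mem_filter]
        apply ha.2
    · simp only [ne_eq, Multiset.mem_toFinset, not_not, mem_filter, and_imp]
      exact fun hi _ ↦ ha.2 i hi
  · intro p₁ hp₁ p₂ hp₂ h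
    apply Nat.Partition.ext
    simp only [true_and, mem_univ, mem_filter] at hp₁ hp₂
    ext i
    simp only [φ, ne_eq, Multiset.mem_toFinset, not_not, smul_eq_mul, Finsupp.mk.injEq] at h
    by_cases hi : i = 0
    · rw [hi]
      rw [Multiset.count_eq_zero_of_notMem]
      · rw [Multiset.count_eq_zero_of_notMem]
        intro a; exact Nat.lt_irrefl 0 (hs 0 (hp₂.2 0 a))
      intro a; exact Nat.lt_irrefl 0 (hs 0 (hp₁.2 0 a))
    · rw [← mul_left_inj' hi]
      rw [funext_iff] at h
      exact h.2 i
  · simp only [φ, mem_filter, mem_finsuppAntidiag, mem_univ, exists_prop, true_and, and_assoc]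
    rintro f ⟨hf, hf₃, hf₄⟩
    have hf' : f ∈ finsuppAntidiag s n := mem_finsuppAntidiag.mpr ⟨hf, hf₃⟩
    simp only [mem_finsuppAntidiag] at hf'
    refine ⟨⟨∑ i ∈ s, Multiset.replicate (f i / i) i, ?_, ?_⟩, ?_, ?_, ?_⟩
    · intro i hi
      simp only [exists_prop, Multiset.mem_sum, mem_map, Function.Embedding.coeFn_mk] at hi
      rcases hi with ⟨t, ht, z⟩
      apply hs
      rwa [Multiset.eq_of_mem_replicate z]
    · simp_rw [Multiset.sum_sum, Multiset.sum_replicate, Nat.nsmul_eq_mul]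
      rw [← hf'.1]
      refine sum_congr rfl fun i hi => Nat.div_mul_cancel ?_
      rcases hf₄ i hi with ⟨w, _, hw₂⟩
      rw [← hw₂]
      exact dvd_mul_left _ _
    · intro i
      simp_rw [Multiset.count_sum', Multiset.count_replicate, sum_ite_eq']
      split_ifs with h
      · rcases hf₄ i h with ⟨w, hw₁, hw₂⟩
        rwa [← hw₂, Nat.mul_div_cancel _ (hs i h)]
      · exact hc _ h
    · intro i hi
      rw [Multiset.mem_sum] at hi
      rcases hi with ⟨j, hj₁, hj₂⟩
      rwa [Multiset.eq_of_mem_replicate hj₂]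
    · ext i
      simp_rw [Multiset.count_sum', Multiset.count_replicate, sum_ite_eq']
      simp only [ne_eq, Multiset.mem_toFinset, not_not, smul_eq_mul, ite_mul,
        zero_mul, Finsupp.coe_mk]
      split_ifs with h
      · apply Nat.div_mul_cancel
        rcases hf₄ i h with ⟨w, _, hw₂⟩
        apply Dvd.intro_left _ hw₂
      · apply symm
        rw [← Finsupp.notMem_support_iff]
        exact notMem_mono hf'.2 h

theorem one_sub_X_pow_mul_indicator (n : ℕ) (hn : 0 < n) :
    (1 - (X : PowerSeries ℤ) ^ n) * indicatorSeries ℤ {k | n ∣ k} = 1 := by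
  ext m
  rw [sub_mul, one_mul, map_sub, coeff_X_pow_mul', coeff_indicator, coeff_one]
  simp only [Set.mem_setOf_eq, coeff_indicator]
  rcases Nat.eq_zero_or_pos m with rfl | hm
  · simp [Nat.not_lt.mpr hn, Nat.le_zero, hn.ne']
  · have : ¬ m = 0 := hm.ne'
    by_cases hd : n ∣ m
    · have hle : n ≤ m := Nat.le_of_dvd hm hd
      have hd' : n ∣ m - n := (Nat.dvd_sub hd dvd_rfl)
      simp [hd, hle, hd', this]
    · by_cases hle : n ≤ m
      · have : ¬ n ∣ m - n := fun h => hd (by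
          have := Nat.dvd_add h (dvd_refl n)
          rwa [Nat.sub_add_cancel hle] at this)
        simp_all
      · simp_all
theorem invOfUnit_eq_indicator (n : ℕ) (hn : 0 < n) :
    PowerSeries.invOfUnit (1 - (X : PowerSeries ℤ) ^ n) 1 = indicatorSeries ℤ {k | n ∣ k} := by
  have h1 : constantCoeff (R := ℤ) (1 - (X : PowerSeries ℤ) ^ n) = (1 : ℤˣ) := by
    simp [zero_pow hn.ne']
  have h2 := PowerSeries.mul_invOfUnit (1 - (X : PowerSeries ℤ) ^ n) 1 h1
  have h3 := one_sub_X_pow_mul_indicator n hn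
  have hne : (1 - (X : PowerSeries ℤ) ^ n) ≠ 0 := by
    intro h
    have := congrArg (constantCoeff (R := ℤ)) h
    simp [zero_pow hn.ne'] at this
  exact mul_left_cancel₀ hne (h2.trans h3.symm)

end

end PartitionAux

/-- For `N ≥ 1` and `M ≥ N`, the coefficient of `x^N` in `∏_{n=1}^{M} (1 - xⁿ)⁻¹`,
computed in `ℤ⟦x⟧`, equals `λ(N)`, the total number of partitions of `N`. -/
theorem coeff_prod_invOfUnit_eq_partitionCount (N M : ℕ) (hN : 1 ≤ N) (hM : N ≤ M) :
    PowerSeries.coeff (R := ℤ) N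
      (∏ n ∈ Finset.Icc 1 M, PowerSeries.invOfUnit (1 - PowerSeries.X ^ n) 1)
      = Fintype.card (Nat.Partition N) := by
  classical
  have hprod : (∏ n ∈ Finset.Icc 1 M, PowerSeries.invOfUnit (1 - PowerSeries.X ^ n) 1)
      = ∏ n ∈ Finset.Icc 1 M, PartitionAux.indicatorSeries ℤ ((· * n) '' Set.univ) := by
    refine Finset.prod_congr rfl fun n hn => ?_
    have hn1 : 0 < n := by
      simp only [Finset.mem_Icc] at hn; omega
    have hset : ((· * n) '' (Set.univ : Set ℕ)) = {k | n ∣ k} := by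
      ext k
      constructor
      · rintro ⟨c, -, rfl⟩; exact Dvd.intro_left c rfl
      · rintro ⟨c, rfl⟩; exact ⟨c, trivial, mul_comm c n⟩
    rw [PartitionAux.invOfUnit_eq_indicator n hn1, hset]
  rw [hprod, ← PartitionAux.partialGF_prop ℤ N (Finset.Icc 1 M)
      (fun i hi => by simp only [Finset.mem_Icc] at hi; omega)
      (fun _ => Set.univ) (fun _ _ => trivial)]
  norm_cast
  rw [← Finset.card_univ]
  congr 1
  ext p
  simp only [Finset.mem_filter, Finset.mem_univ, true_and, iff_true]
  refine ⟨fun _ => trivial, fun j hj => ?_⟩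
  simp only [Finset.mem_Icc]
  refine ⟨p.parts_pos hj, ?_⟩
  calc j ≤ N := by
        simpa [p.parts_sum] using Multiset.single_le_sum (fun _ _ => Nat.zero_le _) _ hj
    _ ≤ M := hM
end

section
/- For every natural number n ≥ 1 there exist complex coefficients c_{n+1}, …, c_{2n} such that for all z ≠ 0, the n-th iterated derivative of the function w ↦ exp(−i/w) at z equals exp(−i/z) · Σ_{k=n+1}^{2n} c_k · z^{−k}, and moreover c_{n+1} = i·(−1)^{n+1}·n! and c_{2n} = i^n. In other words, exp(i/z) · ∂ⁿ_z exp(−i/z) is a Laurent polynomial in 1/z whose terms have degree between n+1 and 2n, with lowest-order coefficient i·(−1)^{n+1}·n! and top coefficient i^n. -/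
open Complex Finset


lemma hasDerivAt_expnegI (z : ℂ) (hz : z ≠ 0) :
    HasDerivAt (fun w : ℂ => Complex.exp (-Complex.I / w))
      (Complex.exp (-Complex.I / z) * (Complex.I * (z ^ (2:ℕ))⁻¹)) z := by
  have h : HasDerivAt (fun w : ℂ => -Complex.I / w) (Complex.I * (z ^ (2:ℕ))⁻¹) z := by
    have h0 := (hasDerivAt_inv hz).const_mul (-Complex.I)
    have : -Complex.I * -(z ^ 2)⁻¹ = Complex.I * (z ^ (2:ℕ))⁻¹ := by ring
    simpa [div_eq_mul_inv, this] using h0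
  exact h.cexp

lemma hasDerivAt_term (k : ℕ) (z : ℂ) (hz : z ≠ 0) :
    HasDerivAt (fun w : ℂ => Complex.exp (-Complex.I / w) * (w ^ k)⁻¹)
      (Complex.exp (-Complex.I / z) *
        (Complex.I * (z ^ (k + 2))⁻¹ - (k : ℂ) * (z ^ (k + 1))⁻¹)) z := by
  have h2 : HasDerivAt (fun w : ℂ => (w ^ k)⁻¹) (-(k : ℂ) * (z ^ (k + 1))⁻¹) z := by
    have h0 := hasDerivAt_zpow (-(k:ℤ)) z (Or.inl hz)
    have e : ∀ w : ℂ, w ^ (-(k:ℤ)) = (w ^ k)⁻¹ := fun w => by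
      rw [zpow_neg, zpow_natCast]
    have e2 : ((-(k:ℤ) : ℂ)) * z ^ (-(k:ℤ) - 1) = -(k : ℂ) * (z ^ (k + 1))⁻¹ := by
      rw [show (-(k:ℤ) - 1 : ℤ) = -((k+1 : ℕ) : ℤ) by push_cast; ring,
        zpow_neg, zpow_natCast]
      push_cast; ring
    rw [← e2]
    simpa [e] using h0
  have := (hasDerivAt_expnegI z hz).mul h2
  refine this.congr_deriv ?_
  have e1 : (z ^ (k + 2))⁻¹ = (z ^ (2:ℕ))⁻¹ * (z ^ k)⁻¹ := by
    rw [← mul_inv, ← pow_add]; ring_nf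
  rw [e1]; ring

lemma sum_shift (a b s : ℕ) (f : ℕ → ℂ) :
    ∑ j ∈ Finset.Icc (a + s) (b + s), f j = ∑ k ∈ Finset.Icc a b, f (k + s) := by
  rw [← Finset.map_add_right_Icc a b s, Finset.sum_map]
  rfl

lemma sum_ite_sub (s t : Finset ℕ) (h : t ⊆ s) (f g : ℕ → ℂ) :
    ∑ j ∈ s, (if j ∈ t then f j else 0) * g j = ∑ j ∈ t, f j * g j := by
  have : ∀ j ∈ s, (if j ∈ t then f j else 0) * g j = if j ∈ t then f j * g j else 0 := by
    intro j _; split <;> simp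
  rw [Finset.sum_congr rfl this, Finset.sum_ite_mem s t (fun j => f j * g j),
    Finset.inter_eq_right.mpr h]


/-- For `n ≥ 1`, the `n`-th derivative of `w ↦ exp(−i/w)` at `z ≠ 0` is
`exp(−i/z)` times a Laurent polynomial in `1/z` with terms of degree between
`n+1` and `2n`, whose lowest coefficient is `i·(−1)^{n+1}·n!` and whose top
coefficient is `iⁿ`. -/
theorem iteratedDeriv_exp_neg_inv (n : ℕ) (hn : 1 ≤ n) :
    ∃ c : ℕ → ℂ,
      (∀ z : ℂ, z ≠ 0 →
        iteratedDeriv n (fun w => Complex.exp (-Complex.I / w)) z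
          = Complex.exp (-Complex.I / z) * ∑ k ∈ Finset.Icc (n + 1) (2 * n), c k * (z ^ k)⁻¹)
      ∧ c (n + 1) = Complex.I * (-1) ^ (n + 1) * n.factorial
      ∧ c (2 * n) = Complex.I ^ n := by
  induction n, hn using Nat.le_induction with
  | base =>
    refine ⟨fun _ => Complex.I, fun z hz => ?_, by norm_num, by norm_num⟩
    rw [iteratedDeriv_one, (hasDerivAt_expnegI z hz).deriv]
    norm_num
  | succ n hn ih =>
    obtain ⟨c, hc, hlow, htop⟩ := ih
    refine ⟨fun j => (if j ∈ Finset.Icc (n+3) (2*n+2) then Complex.I * c (j-2) else 0)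
        + (if j ∈ Finset.Icc (n+2) (2*n+1) then -((j-1 : ℕ) : ℂ) * c (j-1) else 0),
      ?_, ?_, ?_⟩
    · intro z hz
      -- derivative of the sum expression
      have hG : HasDerivAt
          (fun w : ℂ => Complex.exp (-Complex.I / w) *
            ∑ k ∈ Finset.Icc (n + 1) (2 * n), c k * (w ^ k)⁻¹)
          (∑ k ∈ Finset.Icc (n + 1) (2 * n), c k * (Complex.exp (-Complex.I / z) *
            (Complex.I * (z ^ (k + 2))⁻¹ - (k : ℂ) * (z ^ (k + 1))⁻¹))) z := by
        have h := HasDerivAt.fun_sum (u := Finset.Icc (n + 1) (2 * n))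
          (A := fun k w => c k * (Complex.exp (-Complex.I / w) * (w ^ k)⁻¹))
          (A' := fun k => c k * (Complex.exp (-Complex.I / z) *
            (Complex.I * (z ^ (k + 2))⁻¹ - (k : ℂ) * (z ^ (k + 1))⁻¹)))
          (fun k _ => (hasDerivAt_term k z hz).const_mul (c k))
        refine h.congr_of_eventuallyEq (Filter.Eventually.of_forall fun w => ?_)
        beta_reduce
        rw [Finset.mul_sum]
        beta_reduce
        exact Finset.sum_congr rfl fun k _ => by ring
      have hev : iteratedDeriv n (fun w => Complex.exp (-Complex.I / w)) =ᶠ[nhds z]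
          (fun w : ℂ => Complex.exp (-Complex.I / w) *
            ∑ k ∈ Finset.Icc (n + 1) (2 * n), c k * (w ^ k)⁻¹) := by
        filter_upwards [eventually_ne_nhds hz] with w hw
        exact hc w hw
      rw [iteratedDeriv_succ, hev.deriv_eq, hG.deriv]
      -- now algebra of sums
      have hpull : ∑ k ∈ Finset.Icc (n + 1) (2 * n), c k * (Complex.exp (-Complex.I / z) *
            (Complex.I * (z ^ (k + 2))⁻¹ - (k : ℂ) * (z ^ (k + 1))⁻¹))
          = Complex.exp (-Complex.I / z) * ∑ k ∈ Finset.Icc (n + 1) (2 * n),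
            c k * (Complex.I * (z ^ (k + 2))⁻¹ - (k : ℂ) * (z ^ (k + 1))⁻¹) := by
        rw [Finset.mul_sum]
        exact Finset.sum_congr rfl fun k _ => by ring
      rw [hpull]
      congr 1
      beta_reduce
      have hsplit : ∀ j ∈ Finset.Icc (n + 1 + 1) (2 * (n + 1)),
          ((if j ∈ Finset.Icc (n+3) (2*n+2) then Complex.I * c (j-2) else 0)
            + (if j ∈ Finset.Icc (n+2) (2*n+1) then -((j-1 : ℕ) : ℂ) * c (j-1) else 0))
            * (z ^ j)⁻¹
          = (if j ∈ Finset.Icc (n+3) (2*n+2) then Complex.I * c (j-2) else 0) * (z ^ j)⁻¹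
            + (if j ∈ Finset.Icc (n+2) (2*n+1) then -((j-1 : ℕ) : ℂ) * c (j-1) else 0)
              * (z ^ j)⁻¹ := fun j _ => by ring
      rw [Finset.sum_congr rfl hsplit, Finset.sum_add_distrib]
      have hs1 : Finset.Icc (n+3) (2*n+2) ⊆ Finset.Icc (n + 1 + 1) (2 * (n + 1)) := by
        intro x hx; simp only [Finset.mem_Icc] at *; omega
      have hs2 : Finset.Icc (n+2) (2*n+1) ⊆ Finset.Icc (n + 1 + 1) (2 * (n + 1)) := by
        intro x hx; simp only [Finset.mem_Icc] at *; omega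
      rw [sum_ite_sub _ _ hs1, sum_ite_sub _ _ hs2]
      rw [show (n+3) = (n+1)+2 by ring, show 2*n+2 = 2*n+2 from rfl,
        show (2*n+2) = 2*n+2 from rfl]
      rw [show Finset.Icc (n+1+2) (2*n+2) = Finset.Icc ((n+1)+2) ((2*n)+2) by norm_num,
        sum_shift (n+1) (2*n) 2,
        show Finset.Icc (n+2) (2*n+1) = Finset.Icc ((n+1)+1) ((2*n)+1) by norm_num,
        sum_shift (n+1) (2*n) 1]
      rw [← Finset.sum_add_distrib]
      refine Finset.sum_congr rfl fun k hk => ?_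
      simp only [Nat.add_sub_cancel]
      ring
    · have h1 : ¬ (n + 1 + 1 ∈ Finset.Icc (n+3) (2*n+2)) := by
        simp only [Finset.mem_Icc]; omega
      have h2 : n + 1 + 1 ∈ Finset.Icc (n+2) (2*n+1) := by
        simp only [Finset.mem_Icc]; omega
      beta_reduce
      rw [if_neg h1, if_pos h2]
      simp only [show n + 1 + 1 - 1 = n + 1 from rfl, hlow]
      rw [Nat.factorial_succ]
      push_cast
      ring
    · have h1 : 2 * (n + 1) ∈ Finset.Icc (n+3) (2*n+2) := by
        simp only [Finset.mem_Icc]; omega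
      have h2 : ¬ (2 * (n + 1) ∈ Finset.Icc (n+2) (2*n+1)) := by
        simp only [Finset.mem_Icc]; omega
      beta_reduce
      rw [if_pos h1, if_neg h2]
      rw [show 2 * (n + 1) - 2 = 2 * n by omega, htop]
      ring
end

section
/- Let f, g : ℂ → ℂ, let z ∈ ℂ, and suppose f is analytic at z and g is analytic at f(z). Then for every n ≥ 1, the n-th iterated derivative of g ∘ f at z equals Σ_{k=1}^{n} g^{(k)}(f(z)) · B_{n,k}(f′(z), f″(z), …, f^{(n−k+1)}(z)), where g^{(k)} denotes the k-th iterated derivative of g (Faà di Bruno's formula in incomplete Bell polynomial form). -/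
/-- The incomplete Bell polynomial `B_{n,k}(x₁, …, x_{n−k+1})`: the sum over all tuples
`(p₁, …, p_{n−k+1})` of nonnegative integers with `p₁ + ⋯ + p_{n−k+1} = k` and
`p₁ + 2p₂ + ⋯ + (n−k+1)p_{n−k+1} = n` of
`n!/(p₁!⋯p_{n−k+1}!) · ∏ᵢ (xᵢ/i!)^{pᵢ}`.  (Each `pᵢ` is at most `k ≤ n`, so the
bounded index finset captures all solutions.)  The argument `x j` stands for `x_j`. -/
noncomputable def bellPoly (n k : ℕ) (x : ℕ → ℂ) : ℂ :=
  ∑ p ∈ Finset.filter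
      (fun p : Fin (n - k + 1) → ℕ =>
        (∑ i : Fin (n - k + 1), p i) = k ∧ (∑ i : Fin (n - k + 1), ((i : ℕ) + 1) * p i) = n)
      (Fintype.piFinset fun _ : Fin (n - k + 1) => Finset.range (n + 1)),
    ((n.factorial : ℂ) / ∏ i : Fin (n - k + 1), ((p i).factorial : ℂ)) *
      ∏ i : Fin (n - k + 1), (x ((i : ℕ) + 1) / (((i : ℕ) + 1).factorial : ℂ)) ^ p i

namespace FaaAux

open Finset Function

def okSet (N n k : ℕ) : Finset (Fin N → ℕ) :=
  Finset.filter
    (fun p : Fin N → ℕ =>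
      (∑ i : Fin N, p i) = k ∧ (∑ i : Fin N, ((i : ℕ) + 1) * p i) = n)
    (Fintype.piFinset fun _ : Fin N => Finset.range (n + 1))

noncomputable def coef (n : ℕ) {N : ℕ} (p : Fin N → ℕ) : ℂ :=
  (n.factorial : ℂ) / ∏ i : Fin N, ((p i).factorial : ℂ)

noncomputable def mono (x : ℕ → ℂ) {N : ℕ} (p : Fin N → ℕ) : ℂ :=
  ∏ i : Fin N, (x ((i : ℕ) + 1) / (((i : ℕ) + 1).factorial : ℂ)) ^ p i

lemma mem_okSet {N n k : ℕ} {p : Fin N → ℕ} :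
    p ∈ okSet N n k ↔ (∑ i : Fin N, p i) = k ∧ (∑ i : Fin N, ((i : ℕ) + 1) * p i) = n := by
  constructor
  · exact fun h => (Finset.mem_filter.1 h).2
  · intro h
    refine Finset.mem_filter.2 ⟨Fintype.mem_piFinset.2 fun i => Finset.mem_range.2 ?_, h⟩
    have h1 : p i ≤ ∑ j : Fin N, p j := Finset.single_le_sum (fun j _ => Nat.zero_le _) (mem_univ i)
    have h2 : (∑ j : Fin N, p j) ≤ ∑ j : Fin N, ((j : ℕ) + 1) * p j :=
      Finset.sum_le_sum fun j _ => Nat.le_mul_of_pos_left _ (Nat.succ_pos _)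
    omega

lemma okSet_vanish {N n k : ℕ} {p : Fin N → ℕ} (hp : p ∈ okSet N n k) {i : Fin N}
    (hi : n - k + 1 ≤ (i : ℕ)) : p i = 0 := by
  obtain ⟨h1, h2⟩ := mem_okSet.1 hp
  by_contra hne
  have hpi : 1 ≤ p i := Nat.one_le_iff_ne_zero.2 hne
  have hk : p i ≤ k := h1 ▸ Finset.single_le_sum (fun j _ => Nat.zero_le _) (mem_univ i)
  have hkn : k ≤ n := by
    calc k = ∑ j : Fin N, p j := h1.symm
      _ ≤ ∑ j : Fin N, ((j : ℕ) + 1) * p j :=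
        Finset.sum_le_sum fun j _ => Nat.le_mul_of_pos_left _ (Nat.succ_pos _)
      _ = n := h2
  have key : k + (i : ℕ) ≤ n := by
    have : (∑ j : Fin N, p j) + (i : ℕ) * p i ≤ ∑ j : Fin N, ((j : ℕ) + 1) * p j := by
      have := Finset.sum_le_sum (s := univ.erase i)
        (f := fun j : Fin N => p j) (g := fun j : Fin N => ((j : ℕ) + 1) * p j)
        (fun j _ => Nat.le_mul_of_pos_left _ (Nat.succ_pos _))
      calc (∑ j : Fin N, p j) + (i : ℕ) * p i
          = (∑ j ∈ univ.erase i, p j) + ((i : ℕ) + 1) * p i := by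
            rw [← Finset.sum_erase_add univ _ (mem_univ i)]; ring
        _ ≤ (∑ j ∈ univ.erase i, ((j : ℕ) + 1) * p j) + ((i : ℕ) + 1) * p i :=
            Nat.add_le_add_right this _
        _ = ∑ j : Fin N, ((j : ℕ) + 1) * p j := Finset.sum_erase_add univ _ (mem_univ i)
    have hip : (i : ℕ) ≤ (i : ℕ) * p i := Nat.le_mul_of_pos_right _ hpi
    omega
  omega

lemma bellPoly_def (n k : ℕ) (x : ℕ → ℂ) :
    bellPoly n k x = ∑ p ∈ okSet (n - k + 1) n k, coef n p * mono x p := rfl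

def pad {N M : ℕ} (h : N ≤ M) (p : Fin N → ℕ) : Fin M → ℕ :=
  fun i => if hi : (i : ℕ) < N then p ⟨i, hi⟩ else 0

lemma prod_pad {N M : ℕ} (h : N ≤ M) (p : Fin N → ℕ) {β : Type*} [CommMonoid β]
    (G : ℕ → ℕ → β) (hG : ∀ j, G j 0 = 1) :
    ∏ i : Fin M, G (i : ℕ) (pad h p i) = ∏ i : Fin N, G (i : ℕ) (p i) := by
  have e1 : ∏ i : Fin M, G (i : ℕ) (pad h p i)
      = ∏ j ∈ range M, G j (if hj : j < N then p ⟨j, hj⟩ else 0) := by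
    rw [← Fin.prod_univ_eq_prod_range (fun j => G j (if hj : j < N then p ⟨j, hj⟩ else 0)) M]
    exact Finset.prod_congr rfl fun i _ => by simp [pad]
  have e2 : ∏ i : Fin N, G (i : ℕ) (p i)
      = ∏ j ∈ range N, G j (if hj : j < N then p ⟨j, hj⟩ else 0) := by
    rw [← Fin.prod_univ_eq_prod_range (fun j => G j (if hj : j < N then p ⟨j, hj⟩ else 0)) N]
    exact Finset.prod_congr rfl fun i _ => by simp
  rw [e1, e2]
  exact (Finset.prod_subset (Finset.range_subset_range.2 h) (fun j _ hj => by
    rw [Finset.mem_range] at hj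
    simp only [dif_neg hj, hG])).symm

lemma sum_pad {N M : ℕ} (h : N ≤ M) (p : Fin N → ℕ) {β : Type*} [AddCommMonoid β]
    (G : ℕ → ℕ → β) (hG : ∀ j, G j 0 = 0) :
    ∑ i : Fin M, G (i : ℕ) (pad h p i) = ∑ i : Fin N, G (i : ℕ) (p i) :=
  prod_pad (β := Multiplicative β) h p G hG

lemma sum_okSet_pad (n k : ℕ) {N M : ℕ} (h : N ≤ M) (hN : n - k + 1 ≤ N) (x : ℕ → ℂ) :
    ∑ p ∈ okSet N n k, coef n p * mono x p = ∑ q ∈ okSet M n k, coef n q * mono x q := by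
  have van : ∀ q ∈ okSet M n k, pad h (fun i : Fin N => q (Fin.castLE h i)) = q := by
    intro q hq
    funext i
    by_cases hi : (i : ℕ) < N
    · simp only [pad, dif_pos hi]
      congr 1
    · simp only [pad, dif_neg hi]
      exact (okSet_vanish hq (by omega)).symm
  refine Finset.sum_nbij' (pad h) (fun q => fun i : Fin N => q (Fin.castLE h i))
    ?_ ?_ ?_ ?_ ?_
  · intro p hp
    obtain ⟨h1, h2⟩ := mem_okSet.1 hp
    refine mem_okSet.2 ⟨?_, ?_⟩
    · rw [sum_pad h p (fun _ e => e) (fun _ => rfl)]; exact h1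
    · rw [sum_pad h p (fun j e => (j + 1) * e) (fun j => Nat.mul_zero _)]; exact h2
  · intro q hq
    obtain ⟨h1, h2⟩ := mem_okSet.1 hq
    refine mem_okSet.2 ⟨?_, ?_⟩
    · rw [← sum_pad h _ (fun _ e => e) (fun _ => rfl), van q hq]; exact h1
    · rw [← sum_pad h _ (fun j e => (j + 1) * e) (fun j => Nat.mul_zero _), van q hq]; exact h2
  · intro p hp
    funext i
    simp only [pad, Fin.coe_castLE, dif_pos i.isLt, Fin.eta]
  · exact van
  · intro p hp
    have hc : coef n (pad h p) = coef n p := by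
      unfold coef
      rw [prod_pad h p (fun _ e => ((e.factorial : ℂ))) (fun _ => by simp)]
    have hm : mono x (pad h p) = mono x p := by
      unfold mono
      rw [prod_pad h p (fun j e => (x (j + 1) / ((j + 1).factorial : ℂ)) ^ e) (fun _ => pow_zero _)]
    rw [hc, hm]

lemma bellPoly_eq (n k : ℕ) {N : ℕ} (hN : n - k + 1 ≤ N) (x : ℕ → ℂ) :
    bellPoly n k x = ∑ q ∈ okSet N n k, coef n q * mono x q := by
  rw [bellPoly_def]
  exact sum_okSet_pad n k hN le_rfl x

lemma bellPoly_zero {n : ℕ} (hn : 1 ≤ n) (x : ℕ → ℂ) : bellPoly n 0 x = 0 := by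
  rw [bellPoly_def]
  refine Finset.sum_eq_zero fun p hp => ?_
  obtain ⟨h1, h2⟩ := mem_okSet.1 hp
  rw [Finset.sum_eq_zero_iff] at h1
  have : (∑ i : Fin (n - 0 + 1), ((i : ℕ) + 1) * p i) = 0 :=
    Finset.sum_eq_zero fun i _ => by rw [h1 i (mem_univ i), Nat.mul_zero]
  omega

lemma bellPoly_diag (n : ℕ) (x : ℕ → ℂ) : bellPoly n n x = x 1 ^ n := by
  rw [bellPoly_eq n n (N := 1) (by omega) x]
  have hset : okSet 1 n n = {fun _ => n} := by
    ext q
    rw [mem_okSet, Finset.mem_singleton]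
    constructor
    · rintro ⟨h1, -⟩
      funext i
      have : i = 0 := Subsingleton.elim _ _
      subst this
      simpa [Fin.sum_univ_one] using h1
    · rintro rfl
      simp [Fin.sum_univ_one]
  rw [hset, Finset.sum_singleton]
  have h0 : ((n.factorial : ℂ)) ≠ 0 := Nat.cast_ne_zero.2 n.factorial_ne_zero
  simp [coef, mono, Fin.prod_univ_one, div_self h0, Nat.factorial]

section splits
variable {N : ℕ}

lemma prod_split_two {M : Type*} [CommMonoid M] (a b : Fin N) (hab : a ≠ b) (v : Fin N → M) :
    ∏ j, v j = v a * (v b * ∏ j ∈ (univ.erase a).erase b, v j) := by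
  rw [← Finset.mul_prod_erase univ v (mem_univ a),
    ← Finset.mul_prod_erase (univ.erase a) v (Finset.mem_erase.2 ⟨hab.symm, mem_univ b⟩)]

lemma sum_split_two {M : Type*} [AddCommMonoid M] (a b : Fin N) (hab : a ≠ b) (v : Fin N → M) :
    ∑ j, v j = v a + (v b + ∑ j ∈ (univ.erase a).erase b, v j) :=
  prod_split_two (M := Multiplicative M) a b hab v

variable (p : Fin N → ℕ) (a b : Fin N)

lemma shift_sum (hab : a ≠ b) (ha : 1 ≤ p a) (w : Fin N → ℕ) :
    (∑ j, w j * (update (update p a (p a - 1)) b (p b + 1)) j) + w a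
      = (∑ j, w j * p j) + w b := by
  obtain ⟨c, hc⟩ : ∃ c, p a = c + 1 := ⟨p a - 1, by omega⟩
  set q := update (update p a (p a - 1)) b (p b + 1) with hq
  have hqa : q a = c := by rw [hq, update_of_ne hab, update_self]; omega
  have hqb : q b = p b + 1 := by rw [hq, update_self]
  have hoff : ∀ j, j ≠ a → j ≠ b → q j = p j := fun j hja hjb => by
    rw [hq, update_of_ne hjb, update_of_ne hja]
  rw [sum_split_two a b hab (fun j => w j * q j),
    sum_split_two a b hab (fun j => w j * p j)]
  have hrest : ∑ j ∈ (univ.erase a).erase b, w j * q j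
      = ∑ j ∈ (univ.erase a).erase b, w j * p j := by
    refine Finset.sum_congr rfl fun j hj => ?_
    have hjb : j ≠ b := (Finset.mem_erase.1 hj).1
    have hja : j ≠ a := (Finset.mem_erase.1 (Finset.mem_erase.1 hj).2).1
    rw [hoff j hja hjb]
  rw [hrest, hqa, hqb, hc]
  ring

lemma shift_fact (hab : a ≠ b) (ha : 1 ≤ p a) :
    (p b + 1) * ∏ j, (p j).factorial
      = p a * ∏ j, ((update (update p a (p a - 1)) b (p b + 1)) j).factorial := by
  obtain ⟨c, hc⟩ : ∃ c, p a = c + 1 := ⟨p a - 1, by omega⟩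
  set q := update (update p a (p a - 1)) b (p b + 1) with hq
  have hqa : q a = c := by rw [hq, update_of_ne hab, update_self]; omega
  have hqb : q b = p b + 1 := by rw [hq, update_self]
  have hoff : ∀ j, j ≠ a → j ≠ b → q j = p j := fun j hja hjb => by
    rw [hq, update_of_ne hjb, update_of_ne hja]
  rw [prod_split_two a b hab (fun j => (q j).factorial),
    prod_split_two a b hab (fun j => (p j).factorial)]
  have hrest : ∏ j ∈ (univ.erase a).erase b, (q j).factorial
      = ∏ j ∈ (univ.erase a).erase b, (p j).factorial := by
    refine Finset.prod_congr rfl fun j hj => ?_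
    have hjb : j ≠ b := (Finset.mem_erase.1 hj).1
    have hja : j ≠ a := (Finset.mem_erase.1 (Finset.mem_erase.1 hj).2).1
    rw [hoff j hja hjb]
  rw [hrest, hqa, hqb, hc, Nat.factorial_succ c, Nat.factorial_succ (p b)]
  ring

lemma shift_pow {M : Type*} [CommMonoid M] (X : Fin N → M) (hab : a ≠ b) (ha : 1 ≤ p a) :
    X a * ∏ j, X j ^ ((update (update p a (p a - 1)) b (p b + 1)) j)
      = X b * ∏ j, X j ^ p j := by
  obtain ⟨c, hc⟩ : ∃ c, p a = c + 1 := ⟨p a - 1, by omega⟩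
  set q := update (update p a (p a - 1)) b (p b + 1) with hq
  have hqa : q a = c := by rw [hq, update_of_ne hab, update_self]; omega
  have hqb : q b = p b + 1 := by rw [hq, update_self]
  have hoff : ∀ j, j ≠ a → j ≠ b → q j = p j := fun j hja hjb => by
    rw [hq, update_of_ne hjb, update_of_ne hja]
  rw [prod_split_two a b hab (fun j => X j ^ q j),
    prod_split_two a b hab (fun j => X j ^ p j)]
  have hrest : ∏ j ∈ (univ.erase a).erase b, X j ^ q j
      = ∏ j ∈ (univ.erase a).erase b, X j ^ p j := by
    refine Finset.prod_congr rfl fun j hj => ?_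
    have hjb : j ≠ b := (Finset.mem_erase.1 hj).1
    have hja : j ≠ a := (Finset.mem_erase.1 (Finset.mem_erase.1 hj).2).1
    rw [hoff j hja hjb]
  rw [hrest, hqa, hqb, hc, pow_succ, pow_succ]
  simp only [mul_assoc, mul_comm, mul_left_comm]

end splits

section bumps
variable {N : ℕ}

lemma bump_sum (p : Fin N → ℕ) (a : Fin N) (w : Fin N → ℕ) :
    ∑ j, w j * (update p a (p a + 1)) j = (∑ j, w j * p j) + w a := by
  rw [← Finset.add_sum_erase univ (fun j => w j * update p a (p a + 1) j) (mem_univ a),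
      ← Finset.add_sum_erase univ (fun j => w j * p j) (mem_univ a)]
  have hrest : ∑ j ∈ univ.erase a, w j * update p a (p a + 1) j
      = ∑ j ∈ univ.erase a, w j * p j :=
    Finset.sum_congr rfl fun j hj => by rw [update_of_ne (Finset.mem_erase.1 hj).1]
  rw [hrest, update_self]
  ring

lemma bump_fact (p : Fin N → ℕ) (a : Fin N) :
    ∏ j, ((update p a (p a + 1)) j).factorial = (p a + 1) * ∏ j, (p j).factorial := by
  rw [← Finset.mul_prod_erase univ (fun j => ((update p a (p a + 1)) j).factorial) (mem_univ a),
      ← Finset.mul_prod_erase univ (fun j => (p j).factorial) (mem_univ a)]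
  have hrest : ∏ j ∈ univ.erase a, ((update p a (p a + 1)) j).factorial
      = ∏ j ∈ univ.erase a, (p j).factorial :=
    Finset.prod_congr rfl fun j hj => by rw [update_of_ne (Finset.mem_erase.1 hj).1]
  rw [hrest, update_self, Nat.factorial_succ]
  ring

lemma bump_pow {M : Type*} [CommMonoid M] (X : Fin N → M) (p : Fin N → ℕ) (a : Fin N) :
    ∏ j, X j ^ ((update p a (p a + 1)) j) = X a * ∏ j, X j ^ p j := by
  rw [← Finset.mul_prod_erase univ (fun j => X j ^ (update p a (p a + 1)) j) (mem_univ a),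
      ← Finset.mul_prod_erase univ (fun j => X j ^ p j) (mem_univ a)]
  have hrest : ∏ j ∈ univ.erase a, X j ^ (update p a (p a + 1)) j
      = ∏ j ∈ univ.erase a, X j ^ p j :=
    Finset.prod_congr rfl fun j hj => by rw [update_of_ne (Finset.mem_erase.1 hj).1]
  rw [hrest, update_self, pow_succ]
  simp only [mul_assoc, mul_comm, mul_left_comm]

end bumps

lemma prod_fact_ne_zero {N : ℕ} (p : Fin N → ℕ) :
    (∏ i : Fin N, ((p i).factorial : ℂ)) ≠ 0 :=
  Finset.prod_ne_zero_iff.2 fun i _ => Nat.cast_ne_zero.2 (p i).factorial_ne_zero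

lemma x1_bell' (n k : ℕ) (hk1 : 1 ≤ k) (x : ℕ → ℂ) :
    x 1 * ∑ r ∈ okSet (n+2) n (k-1), coef n r * mono x r
      = ∑ q ∈ okSet (n+2) (n+1) k, (q 0 : ℂ) * (coef n q * mono x q) := by
  rw [Finset.mul_sum]
  rw [← Finset.sum_filter_of_ne (s := okSet (n+2) (n+1) k)
      (p := fun q => q 0 ≠ 0) (f := fun q => (q 0 : ℂ) * (coef n q * mono x q))
      (fun q _ hq => by intro h0; apply hq; simp [h0])]
  refine Finset.sum_nbij' (fun r => update r 0 (r 0 + 1)) (fun q => update q 0 (q 0 - 1))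
    ?_ ?_ ?_ ?_ ?_
  · intro r hr
    obtain ⟨h1, h2⟩ := mem_okSet.1 hr
    refine Finset.mem_filter.2 ⟨mem_okSet.2 ⟨?_, ?_⟩, by rw [update_self]; omega⟩
    · have := bump_sum r 0 (fun _ => 1)
      simp only [one_mul] at this
      omega
    · have := bump_sum r 0 (fun j => (j : ℕ) + 1)
      rw [h2] at this
      rw [this]
      simp
  · intro q hq
    obtain ⟨hqmem, hq0⟩ := Finset.mem_filter.1 hq
    obtain ⟨h1, h2⟩ := mem_okSet.1 hqmem
    have hround : update (update q 0 (q 0 - 1)) 0 ((update q 0 (q 0 - 1)) 0 + 1) = q := by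
      funext j
      by_cases hj : j = 0
      · subst hj; simp [Function.update_apply]; omega
      · simp [Function.update_apply, hj]
    refine mem_okSet.2 ⟨?_, ?_⟩
    · have := bump_sum (update q 0 (q 0 - 1)) 0 (fun _ => 1)
      rw [hround] at this
      simp only [one_mul] at this
      omega
    · have := bump_sum (update q 0 (q 0 - 1)) 0 (fun j => (j : ℕ) + 1)
      rw [hround] at this
      have h0 : ((0 : Fin (n+2)) : ℕ) + 1 = 1 := by simp
      rw [h0] at this
      omega
  · intro r _
    funext j
    by_cases hj : j = 0
    · subst hj; simp
    · simp [Function.update_apply, hj]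
  · intro q hq
    obtain ⟨hqmem, hq0⟩ := Finset.mem_filter.1 hq
    have hq0' : q 0 ≠ 0 := hq0
    funext j
    by_cases hj : j = 0
    · subst hj; simp [Function.update_apply]; omega
    · simp [Function.update_apply, hj]
  · intro r hr
    set q := update r 0 (r 0 + 1) with hqdef
    have hq0 : q 0 = r 0 + 1 := update_self _ _ _
    have hfact : ∏ j, ((q j).factorial : ℂ) = ((r 0 + 1 : ℕ) : ℂ) * ∏ j, ((r j).factorial : ℂ) := by
      have := bump_fact r 0
      exact_mod_cast congrArg (Nat.cast : ℕ → ℂ) this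
    have hmono : mono x q = (x 1 / 1) * mono x r := by
      unfold mono
      have := bump_pow (fun i : Fin (n+2) => (x ((i : ℕ) + 1) / (((i : ℕ) + 1).factorial : ℂ))) r 0
      rw [hqdef, this]
      norm_num
    unfold coef
    rw [hq0, hfact, hmono]
    have hne1 : ((r 0 + 1 : ℕ) : ℂ) ≠ 0 := Nat.cast_ne_zero.2 (Nat.succ_ne_zero _)
    have hne2 := prod_fact_ne_zero r
    rw [div_one]
    have hne1' : ((r 0 : ℂ) + 1) ≠ 0 := by exact_mod_cast hne1
    field_simp [hne1', hne2]

lemma key (n k : ℕ) (hk1 : 1 ≤ k) (hkn : k ≤ n) (x : ℕ → ℂ) :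
    (∑ p ∈ okSet (n+2) n k, coef n p *
        ∑ i : Fin (n+2),
          (∏ j ∈ univ.erase i, (x ((j : ℕ)+1) / (((j : ℕ)+1).factorial : ℂ)) ^ p j) *
            ((p i : ℂ) * (x ((i : ℕ)+1) / (((i : ℕ)+1).factorial : ℂ)) ^ (p i - 1) *
              (x ((i : ℕ)+2) / (((i : ℕ)+1).factorial : ℂ))))
      = (∑ q ∈ okSet (n+2) (n+1) k, coef (n+1) q * mono x q)
        - ∑ q ∈ okSet (n+2) (n+1) k, (q 0 : ℂ) * (coef n q * mono x q) := by
  classical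
  set X : Fin (n+2) → ℂ := fun j => x ((j : ℕ)+1) / (((j : ℕ)+1).factorial : ℂ) with hX
  -- Step 1: rewrite RHS as a double sum
  have hRHS : (∑ q ∈ okSet (n+2) (n+1) k, coef (n+1) q * mono x q)
        - (∑ q ∈ okSet (n+2) (n+1) k, (q 0 : ℂ) * (coef n q * mono x q))
      = ∑ q ∈ okSet (n+2) (n+1) k, ∑ i : Fin (n+1),
          (((i : ℕ) : ℂ) + 2) * ((q i.succ : ℂ)) * (coef n q * mono x q) := by
    rw [← Finset.sum_sub_distrib]
    refine Finset.sum_congr rfl fun q hq => ?_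
    obtain ⟨h1, h2⟩ := mem_okSet.1 hq
    have hco : coef (n+1) q = ((n : ℂ) + 2 - 1) * coef n q := by
      unfold coef
      rw [Nat.factorial_succ]
      push_cast
      ring
    have hw : ((n : ℂ) + 2 - 1) = ∑ i : Fin (n+2), (((i : ℕ) : ℂ) + 1) * (q i : ℂ) := by
      have : ((∑ i : Fin (n+2), ((i : ℕ) + 1) * q i : ℕ) : ℂ) = ((n + 1 : ℕ) : ℂ) := by
        rw [h2]
      push_cast at this
      linear_combination (-1 : ℂ) * this
    rw [hco, hw, Fin.sum_univ_succ]
    simp only [Fin.val_zero, Nat.cast_zero, zero_add, one_mul, Fin.val_succ]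
    push_cast
    have hfg : (∑ i : Fin (n+1), ((((i : ℕ) : ℂ)) + 1 + 1) * (q i.succ : ℂ))
        = ∑ i : Fin (n+1), ((((i : ℕ) : ℂ)) + 2) * (q i.succ : ℂ) :=
      Finset.sum_congr rfl fun i _ => by ring
    rw [hfg, ← Finset.sum_mul]
    ring
  rw [hRHS]
  have hLHS : ∀ p ∈ okSet (n+2) n k,
      (coef n p * ∑ i : Fin (n+2), (∏ j ∈ univ.erase i, X j ^ p j) *
          ((p i : ℂ) * X i ^ (p i - 1) * (x ((i : ℕ)+2) / (((i : ℕ)+1).factorial : ℂ))))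
      = ∑ i : Fin (n+1), coef n p * ((∏ j ∈ univ.erase i.castSucc, X j ^ p j) *
          ((p i.castSucc : ℂ) * X i.castSucc ^ (p i.castSucc - 1) *
            (x ((i : ℕ)+2) / (((i : ℕ)+1).factorial : ℂ)))) := by
    intro p hp
    rw [Fin.sum_univ_castSucc (f := fun i : Fin (n+2) =>
      (∏ j ∈ univ.erase i, X j ^ p j) *
        ((p i : ℂ) * X i ^ (p i - 1) * (x ((i : ℕ)+2) / (((i : ℕ)+1).factorial : ℂ))))]
    have hlast : p (Fin.last (n+1)) = 0 := okSet_vanish hp (by rw [Fin.val_last]; omega)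
    rw [hlast]
    simp only [Nat.cast_zero, zero_mul, mul_zero, add_zero]
    rw [Finset.mul_sum]
    refine Finset.sum_congr rfl fun i _ => ?_
    simp only [Fin.coe_castSucc]
  rw [Finset.sum_congr rfl hLHS]
  rw [← Finset.sum_product'
    (f := fun (p : Fin (n+2) → ℕ) (i : Fin (n+1)) => coef n p *
      ((∏ j ∈ univ.erase i.castSucc, X j ^ p j) *
        ((p i.castSucc : ℂ) * X i.castSucc ^ (p i.castSucc - 1) *
          (x ((i : ℕ)+2) / (((i : ℕ)+1).factorial : ℂ)))))]
  rw [← Finset.sum_product'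
    (f := fun (q : Fin (n+2) → ℕ) (i : Fin (n+1)) =>
      (((i : ℕ) : ℂ) + 2) * ((q i.succ : ℂ)) * (coef n q * mono x q))]
  rw [← Finset.sum_filter_of_ne
    (s := (okSet (n+2) n k) ×ˢ (univ : Finset (Fin (n+1))))
    (p := fun z => z.1 z.2.castSucc ≠ 0)
    (f := fun z => coef n z.1 *
      ((∏ j ∈ univ.erase z.2.castSucc, X j ^ z.1 j) *
        ((z.1 z.2.castSucc : ℂ) * X z.2.castSucc ^ (z.1 z.2.castSucc - 1) *
          (x ((z.2 : ℕ)+2) / (((z.2 : ℕ)+1).factorial : ℂ)))))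
    (fun z _ hz => by
      intro h0
      apply hz
      simp [h0])]
  rw [← Finset.sum_filter_of_ne
    (s := (okSet (n+2) (n+1) k) ×ˢ (univ : Finset (Fin (n+1))))
    (p := fun z => z.1 z.2.succ ≠ 0)
    (f := fun z => (((z.2 : ℕ) : ℂ) + 2) * ((z.1 z.2.succ : ℂ)) * (coef n z.1 * mono x z.1))
    (fun z _ hz => by
      intro h0
      apply hz
      simp [h0])]
  refine Finset.sum_nbij'
    (fun z => (update (update z.1 z.2.castSucc (z.1 z.2.castSucc - 1))
        z.2.succ (z.1 z.2.succ + 1), z.2))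
    (fun z => (update (update z.1 z.2.succ (z.1 z.2.succ - 1))
        z.2.castSucc (z.1 z.2.castSucc + 1), z.2))
    ?_ ?_ ?_ ?_ ?_
  · rintro ⟨p, i⟩ hz
    dsimp only at hz ⊢
    obtain ⟨hps, hp0⟩ := Finset.mem_filter.1 hz
    have hpmem := (Finset.mem_product.1 hps).1
    obtain ⟨h1, h2⟩ := mem_okSet.1 hpmem
    dsimp only at h1 h2
    have hp1 : 1 ≤ p i.castSucc := by
      have : p i.castSucc ≠ 0 := hp0
      omega
    have hne : i.castSucc ≠ i.succ := ne_of_lt (Fin.castSucc_lt_succ : i.castSucc < i.succ)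
    refine Finset.mem_filter.2 ⟨Finset.mem_product.2 ⟨mem_okSet.2 ⟨?_, ?_⟩, mem_univ _⟩, ?_⟩
    · have := shift_sum p i.castSucc i.succ hne hp1 (fun _ => 1)
      simp only [one_mul] at this
      dsimp only
      omega
    · have := shift_sum p i.castSucc i.succ hne hp1 (fun j => (j : ℕ) + 1)
      rw [h2] at this
      simp only [Fin.coe_castSucc, Fin.val_succ] at this
      dsimp only
      omega
    · dsimp only
      simp only [update_self]
      omega
  · rintro ⟨q, i⟩ hz
    dsimp only at hz ⊢
    obtain ⟨hqs, hq0⟩ := Finset.mem_filter.1 hz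
    have hqmem := (Finset.mem_product.1 hqs).1
    obtain ⟨h1, h2⟩ := mem_okSet.1 hqmem
    dsimp only at h1 h2
    have hq1 : 1 ≤ q i.succ := by
      have : q i.succ ≠ 0 := hq0
      omega
    have hne : i.succ ≠ i.castSucc := (ne_of_lt (Fin.castSucc_lt_succ : i.castSucc < i.succ)).symm
    refine Finset.mem_filter.2 ⟨Finset.mem_product.2 ⟨mem_okSet.2 ⟨?_, ?_⟩, mem_univ _⟩, ?_⟩
    · have := shift_sum q i.succ i.castSucc hne hq1 (fun _ => 1)
      simp only [one_mul] at this
      dsimp only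
      omega
    · have := shift_sum q i.succ i.castSucc hne hq1 (fun j => (j : ℕ) + 1)
      rw [h2] at this
      simp only [Fin.coe_castSucc, Fin.val_succ] at this
      dsimp only
      omega
    · dsimp only
      simp only [update_self]
      omega
  · rintro ⟨p, i⟩ hz
    dsimp only at hz ⊢
    obtain ⟨hps, hp0⟩ := Finset.mem_filter.1 hz
    have hp1 : 1 ≤ p i.castSucc := by
      have : p i.castSucc ≠ 0 := hp0
      omega
    have hne : i.castSucc ≠ i.succ := ne_of_lt (Fin.castSucc_lt_succ : i.castSucc < i.succ)
    simp only [Prod.mk.injEq]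
    refine ⟨?_, trivial⟩
    funext j
    by_cases hjc : j = i.castSucc
    · subst hjc
      simp [Function.update_apply, hne, (Ne.symm hne)]
      omega
    · by_cases hjs : j = i.succ
      · subst hjs
        simp [Function.update_apply, hne, (Ne.symm hne), hjc]
      · simp [Function.update_apply, hjc, hjs]
  · rintro ⟨q, i⟩ hz
    dsimp only at hz ⊢
    obtain ⟨hqs, hq0⟩ := Finset.mem_filter.1 hz
    have hq1 : 1 ≤ q i.succ := by
      have : q i.succ ≠ 0 := hq0
      omega
    have hne : i.castSucc ≠ i.succ := ne_of_lt (Fin.castSucc_lt_succ : i.castSucc < i.succ)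
    simp only [Prod.mk.injEq]
    refine ⟨?_, trivial⟩
    funext j
    by_cases hjc : j = i.castSucc
    · subst hjc
      simp [Function.update_apply, hne, (Ne.symm hne)]
    · by_cases hjs : j = i.succ
      · subst hjs
        simp [Function.update_apply, hne, (Ne.symm hne), hjc]
        omega
      · simp [Function.update_apply, hjc, hjs]
  · rintro ⟨p, i⟩ hz
    dsimp only at hz ⊢
    obtain ⟨hps, hp0⟩ := Finset.mem_filter.1 hz
    have hpmem := (Finset.mem_product.1 hps).1
    obtain ⟨h1, h2⟩ := mem_okSet.1 hpmem
    have hp1 : 1 ≤ p i.castSucc := by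
      have : p i.castSucc ≠ 0 := hp0
      omega
    have hne : i.castSucc ≠ i.succ := ne_of_lt (Fin.castSucc_lt_succ : i.castSucc < i.succ)
    set q := update (update p i.castSucc (p i.castSucc - 1)) i.succ (p i.succ + 1) with hqdef
    have hqss : q i.succ = p i.succ + 1 := by rw [hqdef, update_self]
    -- (C) the x-factor
    have hC : x ((i : ℕ)+2) / (((i : ℕ)+1).factorial : ℂ)
        = (((i : ℕ) : ℂ) + 2) * X i.succ := by
      have hfne : ((((i : ℕ) + 1).factorial : ℂ)) ≠ 0 :=
        Nat.cast_ne_zero.2 (Nat.factorial_ne_zero _)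
      have h2ne : (((i : ℕ) : ℂ) + 2) ≠ 0 := by
        have h' : ((i : ℕ) : ℂ) + 2 = (((i : ℕ) + 2 : ℕ) : ℂ) := by push_cast; ring
        rw [h']
        exact Nat.cast_ne_zero.2 (by omega)
      rw [hX]
      simp only [Fin.val_succ]
      rw [Nat.factorial_succ ((i : ℕ) + 1), Nat.cast_mul]
      rw [show (((i : ℕ) + 1 + 1 : ℕ) : ℂ) = ((i : ℕ) : ℂ) + 2 by push_cast; ring]
      rw [← mul_div_assoc, mul_div_mul_left _ _ h2ne]
    -- (A) monomial identity
    have hA : (∏ j ∈ univ.erase i.castSucc, X j ^ p j) *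
          (X i.castSucc ^ (p i.castSucc - 1) * X i.succ) = mono x q := by
      have hsplitp : ∏ j ∈ univ.erase i.castSucc, X j ^ p j
          = X i.succ ^ p i.succ *
            ∏ j ∈ (univ.erase i.castSucc).erase i.succ, X j ^ p j := by
        rw [← Finset.mul_prod_erase (univ.erase i.castSucc) (fun j => X j ^ p j)
          (Finset.mem_erase.2 ⟨Ne.symm hne, mem_univ _⟩)]
      have hsplitq : mono x q
          = X i.castSucc ^ q i.castSucc * (X i.succ ^ q i.succ *
              ∏ j ∈ (univ.erase i.castSucc).erase i.succ, X j ^ q j) := by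
        unfold mono
        rw [prod_split_two i.castSucc i.succ hne (fun j => X j ^ q j)]
      have hqcs : q i.castSucc = p i.castSucc - 1 := by
        rw [hqdef, update_of_ne hne, update_self]
      have hrest : ∏ j ∈ (univ.erase i.castSucc).erase i.succ, X j ^ q j
          = ∏ j ∈ (univ.erase i.castSucc).erase i.succ, X j ^ p j := by
        refine Finset.prod_congr rfl fun j hj => ?_
        have hjs : j ≠ i.succ := (Finset.mem_erase.1 hj).1
        have hjc : j ≠ i.castSucc := (Finset.mem_erase.1 (Finset.mem_erase.1 hj).2).1
        rw [hqdef, update_of_ne hjs, update_of_ne hjc]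
      rw [hsplitp, hsplitq, hqcs, hqss, hrest, pow_succ]
      ring
    -- (B) coefficient identity
    have hB : (p i.castSucc : ℂ) * coef n p = ((q i.succ : ℂ)) * coef n q := by
      have hNat := shift_fact p i.castSucc i.succ hne hp1
      have hCast : ((p i.succ : ℂ) + 1) * ∏ j, ((p j).factorial : ℂ)
          = (p i.castSucc : ℂ) * ∏ j, ((q j).factorial : ℂ) := by
        rw [hqdef]
        exact_mod_cast congrArg (Nat.cast : ℕ → ℂ) hNat
      unfold coef
      have hne1 := prod_fact_ne_zero p
      have hne2 := prod_fact_ne_zero q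
      rw [hqss]
      push_cast
      field_simp
      linear_combination (-(n.factorial : ℂ)) * hCast
    rw [hC]
    linear_combination ((((i : ℕ) : ℂ) + 2) * ((p i.castSucc : ℂ) * coef n p)) * hA
      + ((((i : ℕ) : ℂ) + 2) * mono x q) * hB

lemma hasDerivAt_bell (n k : ℕ) (hk1 : 1 ≤ k) (hkn : k ≤ n) (x : ℕ → ℂ → ℂ) (z : ℂ)
    (hx : ∀ j, HasDerivAt (fun w => x j w) (x (j+1) z) z) :
    HasDerivAt (fun w => bellPoly n k (fun j => x j w))
      (bellPoly (n+1) k (fun j => x j z) - x 1 z * bellPoly n (k-1) (fun j => x j z)) z := by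
  have hfun : (fun w => bellPoly n k (fun j => x j w))
      = fun w => ∑ p ∈ okSet (n+2) n k, coef n p * ∏ i : Fin (n+2),
          (x ((i : ℕ)+1) w / (((i : ℕ)+1).factorial : ℂ)) ^ p i := by
    funext w
    rw [bellPoly_eq n k (N := n+2) (by omega) (fun j => x j w)]
    rfl
  rw [hfun]
  have hterm : ∀ p ∈ okSet (n+2) n k,
      HasDerivAt (fun w => coef n p * ∏ i : Fin (n+2),
          (x ((i : ℕ)+1) w / (((i : ℕ)+1).factorial : ℂ)) ^ p i)
        (coef n p * ∑ i : Fin (n+2),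
          (∏ j ∈ univ.erase i, (x ((j : ℕ)+1) z / (((j : ℕ)+1).factorial : ℂ)) ^ p j) *
            ((p i : ℂ) * (x ((i : ℕ)+1) z / (((i : ℕ)+1).factorial : ℂ)) ^ (p i - 1) *
              (x ((i : ℕ)+2) z / (((i : ℕ)+1).factorial : ℂ)))) z := by
    intro p _
    have hprod := HasDerivAt.finset_prod (u := (univ : Finset (Fin (n+2))))
      (f := fun i w => (x ((i : ℕ)+1) w / (((i : ℕ)+1).factorial : ℂ)) ^ p i)
      (f' := fun i => (p i : ℂ) * (x ((i : ℕ)+1) z / (((i : ℕ)+1).factorial : ℂ)) ^ (p i - 1) *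
        (x ((i : ℕ)+2) z / (((i : ℕ)+1).factorial : ℂ)))
      (fun i _ => ((hx ((i : ℕ)+1)).div_const _).pow (p i))
    have := hprod.const_mul (coef n p)
    simpa only [smul_eq_mul, Finset.prod_apply] using this
  have H := HasDerivAt.fun_sum hterm
  have hD : (∑ p ∈ okSet (n+2) n k, coef n p * ∑ i : Fin (n+2),
        (∏ j ∈ univ.erase i, (x ((j : ℕ)+1) z / (((j : ℕ)+1).factorial : ℂ)) ^ p j) *
          ((p i : ℂ) * (x ((i : ℕ)+1) z / (((i : ℕ)+1).factorial : ℂ)) ^ (p i - 1) *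
            (x ((i : ℕ)+2) z / (((i : ℕ)+1).factorial : ℂ))))
      = bellPoly (n+1) k (fun j => x j z) - x 1 z * bellPoly n (k-1) (fun j => x j z) := by
    rw [key n k hk1 hkn (fun j => x j z)]
    rw [bellPoly_eq (n+1) k (N := n+2) (by omega) (fun j => x j z)]
    rw [bellPoly_eq n (k-1) (N := n+2) (by omega) (fun j => x j z)]
    rw [x1_bell' n k hk1 (fun j => x j z)]
  rw [← hD]
  exact H

lemma analyticAt_iteratedDeriv {f : ℂ → ℂ} {z : ℂ} (hf : AnalyticAt ℂ f z) (m : ℕ) :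
    AnalyticAt ℂ (iteratedDeriv m f) z := by
  induction m with
  | zero => simpa [iteratedDeriv_zero] using hf
  | succ m ih =>
    rw [iteratedDeriv_succ]
    have h1 : AnalyticAt ℂ (fderiv ℂ (iteratedDeriv m f)) z := ih.fderiv
    have h2 : AnalyticAt ℂ (fun y => fderiv ℂ (iteratedDeriv m f) y 1) z :=
      ((ContinuousLinearMap.apply ℂ ℂ (1 : ℂ)).analyticAt _).comp h1
    have heq : deriv (iteratedDeriv m f) = fun y => fderiv ℂ (iteratedDeriv m f) y 1 := by
      funext y
      rw [← fderiv_apply_one_eq_deriv]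
    rw [heq]
    exact h2

lemma hasDerivAt_iteratedDeriv {f : ℂ → ℂ} {z : ℂ} (hf : AnalyticAt ℂ f z) (j : ℕ) :
    HasDerivAt (iteratedDeriv j f) (iteratedDeriv (j+1) f z) z := by
  have h := (analyticAt_iteratedDeriv hf j).differentiableAt.hasDerivAt
  rwa [iteratedDeriv_succ]

end FaaAux

open Finset Function FaaAux

/-- Faà di Bruno's formula in incomplete Bell polynomial form: if `f` is analytic at `z`
and `g` is analytic at `f z`, then for `n ≥ 1`,
`(g ∘ f)⁽ⁿ⁾(z) = Σ_{k=1}^{n} g⁽ᵏ⁾(f z) · B_{n,k}(f′(z), …, f⁽ⁿ⁻ᵏ⁺¹⁾(z))`. -/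
theorem iteratedDeriv_comp_eq_sum_bellPoly (f g : ℂ → ℂ) (z : ℂ)
    (hf : AnalyticAt ℂ f z) (hg : AnalyticAt ℂ g (f z)) (n : ℕ) (hn : 1 ≤ n) :
    iteratedDeriv n (g ∘ f) z
      = ∑ k ∈ Finset.Icc 1 n,
          iteratedDeriv k g (f z) * bellPoly n k (fun j => iteratedDeriv j f z) := by
  have hsum : ∀ (m : ℕ) (h : ℕ → ℂ), (∑ k ∈ Finset.Icc 1 m, h k) = ∑ j ∈ range m, h (j+1) := by
    intro m h
    rw [← Finset.Ico_add_one_right_eq_Icc, Finset.sum_Ico_eq_sum_range]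
    simp [add_comm]
  suffices H : ∀ m, 1 ≤ m → ∀ z, AnalyticAt ℂ f z → AnalyticAt ℂ g (f z) →
      iteratedDeriv m (g ∘ f) z
        = ∑ k ∈ Finset.Icc 1 m,
            iteratedDeriv k g (f z) * bellPoly m k (fun j => iteratedDeriv j f z) by
    exact H n hn z hf hg
  intro m hm
  induction m, hm using Nat.le_induction with
  | base =>
    intro z hf hg
    rw [iteratedDeriv_one, deriv_comp z hg.differentiableAt hf.differentiableAt]
    rw [Finset.Icc_self, Finset.sum_singleton, bellPoly_diag 1, iteratedDeriv_one,
      iteratedDeriv_one, pow_one]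
  | succ n hn ih =>
    intro z hf hg
    have hev : (iteratedDeriv n (g ∘ f)) =ᶠ[nhds z]
        (fun w => ∑ k ∈ Finset.Icc 1 n,
          iteratedDeriv k g (f w) * bellPoly n k (fun j => iteratedDeriv j f w)) := by
      filter_upwards [hf.eventually_analyticAt,
        hf.continuousAt.eventually hg.eventually_analyticAt] with w hfw hgw
      exact ih w hfw hgw
    rw [iteratedDeriv_succ, hev.deriv_eq]
    have hder : HasDerivAt (fun w => ∑ k ∈ Finset.Icc 1 n,
          iteratedDeriv k g (f w) * bellPoly n k (fun j => iteratedDeriv j f w))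
        (∑ k ∈ Finset.Icc 1 n,
          (iteratedDeriv (k+1) g (f z) * deriv f z *
              bellPoly n k (fun j => iteratedDeriv j f z)
            + iteratedDeriv k g (f z) *
              (bellPoly (n+1) k (fun j => iteratedDeriv j f z)
                - iteratedDeriv 1 f z * bellPoly n (k-1) (fun j => iteratedDeriv j f z)))) z := by
      apply HasDerivAt.fun_sum
      intro k hk
      obtain ⟨hk1, hkn⟩ := Finset.mem_Icc.1 hk
      exact ((hasDerivAt_iteratedDeriv hg k).comp z hf.differentiableAt.hasDerivAt).mul
        (hasDerivAt_bell n k hk1 hkn (fun j w => iteratedDeriv j f w) z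
          (fun j => hasDerivAt_iteratedDeriv hf j))
    rw [hder.deriv]
    -- algebra
    set X : ℕ → ℂ := fun j => iteratedDeriv j f z with hXdef
    have hX1 : X 1 = deriv f z := by simp only [hXdef, iteratedDeriv_one]
    set E : ℕ → ℂ := fun j => iteratedDeriv (j+1) g (f z) * deriv f z * bellPoly n j X with hEdef
    set D : ℕ → ℂ := fun j => iteratedDeriv (j+1) g (f z) * bellPoly (n+1) (j+1) X with hDdef
    rw [hsum, hsum]
    have hterm : ∀ j, (iteratedDeriv (j+1+1) g (f z) * deriv f z * bellPoly n (j+1) X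
          + iteratedDeriv (j+1) g (f z) *
            (bellPoly (n+1) (j+1) X - X 1 * bellPoly n (j+1-1) X))
        = D j + (E (j+1) - E j) := by
      intro j
      rw [hDdef, hEdef, hX1]
      simp only [Nat.add_sub_cancel]
      ring
    calc ∑ j ∈ range n, (iteratedDeriv (j+1+1) g (f z) * deriv f z * bellPoly n (j+1) X
          + iteratedDeriv (j+1) g (f z) *
            (bellPoly (n+1) (j+1) X - X 1 * bellPoly n (j+1-1) X))
        = ∑ j ∈ range n, (D j + (E (j+1) - E j)) := Finset.sum_congr rfl fun j _ => hterm j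
      _ = (∑ j ∈ range n, D j) + ∑ j ∈ range n, (E (j+1) - E j) := Finset.sum_add_distrib
      _ = (∑ j ∈ range n, D j) + (E n - E 0) := by rw [Finset.sum_range_sub E n]
      _ = (∑ j ∈ range n, D j) + D n := by
          have hE0 : E 0 = 0 := by
            rw [hEdef]
            simp [bellPoly_zero (by omega : 1 ≤ n) X]
          have hEn : E n = D n := by
            rw [hEdef, hDdef]
            simp only
            rw [bellPoly_diag n X, bellPoly_diag (n+1) X, ← hX1, pow_succ]
            ring
          rw [hE0, hEn, sub_zero]
      _ = ∑ j ∈ range (n+1), D j := (Finset.sum_range_succ D n).symm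
end

section
/- Let g : ℂ → ℂ be analytic at z ∈ ℂ. Then for every n ≥ 1, the n-th iterated derivative of the function w ↦ exp(g(w)) at z equals exp(g(z)) · Σ_{k=1}^{n} B_{n,k}(g′(z), g″(z), …, g^{(n−k+1)}(z)). -/
open Finset Polynomial Nat

noncomputable def Sq (n : ℕ) (y : ℕ → ℂ) : Polynomial ℂ :=
  ∑ v ∈ Finset.Icc 1 n, Polynomial.C (y v) * Polynomial.X ^ v

/-- coefficient of `X^n` in `(Sq n y)^k` as a sum over tuples. -/
lemma coeff_Sq_pow (n k : ℕ) (y : ℕ → ℂ) :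
    ((Sq n y) ^ k).coeff n
      = ∑ f ∈ (Fintype.piFinset fun _ : Fin k => Finset.Icc 1 n).filter
            (fun f => ∑ i, f i = n), ∏ i, y (f i) := by
  have h1 : (Sq n y) ^ k = ∏ _i : Fin k, Sq n y := by
    simp [Finset.prod_const]
  rw [h1]
  unfold Sq
  rw [Finset.prod_univ_sum]
  rw [Polynomial.finset_sum_coeff, Finset.sum_filter]
  refine Finset.sum_congr rfl fun f hf => ?_
  have : ∏ i : Fin k, (Polynomial.C (y (f i)) * Polynomial.X ^ f i)
      = Polynomial.C (∏ i, y (f i)) * Polynomial.X ^ (∑ i, f i) := by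
    rw [Finset.prod_mul_distrib, map_prod, Finset.prod_pow_eq_pow_sum]
  rw [this, Polynomial.coeff_C_mul, Polynomial.coeff_X_pow]
  by_cases h : (∑ i, f i) = n
  · simp [h]
  · rw [if_neg h, if_neg (fun hh => h hh.symm), mul_zero]

/-- transport of a product over `Icc 1 n` to a product over `Fin m`. -/
lemma prod_Icc_eq_prod_fin {M : Type*} [CommMonoid M] {m n : ℕ} (hmn : m ≤ n)
    (G : ℕ → M) (hG : ∀ v, ¬(1 ≤ v ∧ v ≤ m) → G v = 1) :
    ∏ v ∈ Finset.Icc 1 n, G v = ∏ i : Fin m, G ((i : ℕ) + 1) := by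
  rw [← Finset.prod_subset (Finset.Icc_subset_Icc_right hmn)
      (fun x hx hx2 => hG x (by simp only [Finset.mem_Icc] at hx hx2 ⊢; omega))]
  rw [← Finset.Ico_add_one_right_eq_Icc, Finset.prod_Ico_eq_prod_range]
  rw [Fin.prod_univ_eq_prod_range (fun i => G (i + 1))]
  simp [Nat.add_comm]

lemma sum_Icc_eq_sum_fin {m n : ℕ} (hmn : m ≤ n)
    (G : ℕ → ℕ) (hG : ∀ v, ¬(1 ≤ v ∧ v ≤ m) → G v = 0) :
    ∑ v ∈ Finset.Icc 1 n, G v = ∑ i : Fin m, G ((i : ℕ) + 1) := by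
  rw [← Finset.sum_subset (Finset.Icc_subset_Icc_right hmn)
      (fun x hx hx2 => hG x (by simp only [Finset.mem_Icc] at hx hx2 ⊢; omega))]
  rw [← Finset.Ico_add_one_right_eq_Icc, Finset.sum_Ico_eq_sum_range]
  rw [Fin.sum_univ_eq_sum_range (fun i => G (i + 1))]
  simp [Nat.add_comm]

lemma support_bound {n k : ℕ} (P : ℕ → ℕ)
    (hsum : ∑ v ∈ Finset.Icc 1 n, P v = k) (hwt : ∑ v ∈ Finset.Icc 1 n, v * P v = n) :
    ∀ v, n - k + 1 < v → v ≤ n → P v = 0 := by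
  intro v hv hvn
  by_contra hPv
  have key : ∑ w ∈ Finset.Icc 1 n, w * P w
      = (∑ w ∈ Finset.Icc 1 n, P w) + ∑ w ∈ Finset.Icc 1 n, (w - 1) * P w := by
    rw [← Finset.sum_add_distrib]
    refine Finset.sum_congr rfl fun w hw => ?_
    rw [Finset.mem_Icc] at hw
    obtain ⟨t, rfl⟩ := Nat.exists_eq_add_of_le hw.1
    simp [Nat.add_sub_cancel_left, Nat.add_mul]
  have hv1 : 1 ≤ v := by omega
  have h1 : (v - 1) * P v ≤ ∑ w ∈ Finset.Icc 1 n, (w - 1) * P w :=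
    Finset.single_le_sum (f := fun w => (w - 1) * P w) (fun i _ => Nat.zero_le _)
      (Finset.mem_Icc.mpr ⟨hv1, hvn⟩)
  have h2 : v - 1 ≤ (v - 1) * P v := Nat.le_mul_of_pos_right _ (Nat.pos_of_ne_zero hPv)
  omega

/-- extension of a `Fin (n-k+1)`-tuple to a function on `ℕ` (indexing shifted by 1). -/
def phiMap (n k : ℕ) (p : Fin (n - k + 1) → ℕ) : ℕ → ℕ :=
  fun v => if h : 1 ≤ v ∧ v ≤ n - k + 1 then p ⟨v - 1, by omega⟩ else 0

lemma phiMap_succ (n k : ℕ) (p : Fin (n - k + 1) → ℕ) (i : Fin (n - k + 1)) :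
    phiMap n k p ((i : ℕ) + 1) = p i := by
  rw [phiMap, dif_pos ⟨by omega, by omega⟩]
  congr 1

lemma phiMap_zero (n k : ℕ) (p : Fin (n - k + 1) → ℕ) (v : ℕ)
    (hv : ¬(1 ≤ v ∧ v ≤ n - k + 1)) : phiMap n k p v = 0 := dif_neg hv

lemma bellPoly_eq_coeff (n k : ℕ) (hk : 1 ≤ k) (hkn : k ≤ n) (x : ℕ → ℂ) :
    bellPoly n k x = ((n.factorial : ℂ) / (k.factorial : ℂ))
      * ((Sq n (fun v => x v / (v.factorial : ℂ))) ^ k).coeff n := by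
  have hmn : n - k + 1 ≤ n := by omega
  unfold Sq
  rw [Finset.sum_pow_eq_sum_piAntidiag, Polynomial.finset_sum_coeff]
  have hco : ∀ P ∈ Finset.piAntidiag (Finset.Icc 1 n) k,
      ((Nat.multinomial (Finset.Icc 1 n) P : Polynomial ℂ) *
        ∏ v ∈ Finset.Icc 1 n, (Polynomial.C (x v / (v.factorial : ℂ)) * Polynomial.X ^ v) ^ P v).coeff n
      = if (∑ v ∈ Finset.Icc 1 n, v * P v) = n then
          (Nat.multinomial (Finset.Icc 1 n) P : ℂ)
            * ∏ v ∈ Finset.Icc 1 n, (x v / (v.factorial : ℂ)) ^ P v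
        else 0 := by
    intro P hP
    have hprod : ∏ v ∈ Finset.Icc 1 n, (Polynomial.C (x v / (v.factorial : ℂ)) * Polynomial.X ^ v) ^ P v
        = Polynomial.C (∏ v ∈ Finset.Icc 1 n, (x v / (v.factorial : ℂ)) ^ P v)
            * Polynomial.X ^ (∑ v ∈ Finset.Icc 1 n, v * P v) := by
      simp_rw [mul_pow, ← Polynomial.C_pow, ← pow_mul]
      rw [Finset.prod_mul_distrib, map_prod, Finset.prod_pow_eq_pow_sum]
    rw [hprod, ← map_natCast (Polynomial.C (R := ℂ)), ← mul_assoc, ← map_mul,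
      Polynomial.coeff_C_mul, Polynomial.coeff_X_pow]
    by_cases h : (∑ v ∈ Finset.Icc 1 n, v * P v) = n
    · simp [h]
    · rw [if_neg h, if_neg (fun hh => h hh.symm), mul_zero]
  rw [Finset.sum_congr rfl hco, ← Finset.sum_filter, Finset.mul_sum]
  unfold bellPoly
  refine Finset.sum_nbij' (phiMap n k) (fun P i => P ((i : ℕ) + 1)) ?_ ?_ ?_ ?_ ?_
  · intro p hp
    simp only [Finset.mem_filter, Fintype.mem_piFinset, Finset.mem_range] at hp
    obtain ⟨hp1, hp2, hp3⟩ := hp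
    simp only [Finset.mem_filter, Finset.mem_piAntidiag]
    refine ⟨⟨?_, ?_⟩, ?_⟩
    · rw [sum_Icc_eq_sum_fin hmn _ (phiMap_zero n k p)]
      rw [Finset.sum_congr rfl (fun i _ => phiMap_succ n k p i)]; exact hp2
    · intro v hv
      by_cases h : 1 ≤ v ∧ v ≤ n - k + 1
      · exact Finset.mem_Icc.mpr ⟨h.1, le_trans h.2 hmn⟩
      · exact absurd (phiMap_zero n k p v h) hv
    · rw [sum_Icc_eq_sum_fin hmn (fun v => v * phiMap n k p v)
        (fun v hv => by simp [phiMap_zero n k p v hv])]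
      rw [Finset.sum_congr rfl (fun (i : Fin (n - k + 1)) _ => by rw [phiMap_succ n k p i])]
      exact hp3
  · intro P hP
    simp only [Finset.mem_filter, Finset.mem_piAntidiag] at hP
    obtain ⟨⟨hP1, hP2⟩, hP3⟩ := hP
    have hP1' : ∑ v ∈ Finset.Icc 1 n, P v = k := hP1
    have hP0 : ∀ v, ¬(1 ≤ v ∧ v ≤ n - k + 1) → P v = 0 := by
      intro v hv
      by_cases h1 : 1 ≤ v
      · by_cases h2 : v ≤ n
        · exact support_bound P hP1' hP3 v (by omega) h2
        · by_contra hne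
          exact h2 (Finset.mem_Icc.mp (hP2 v hne)).2
      · by_contra hne
        exact h1 (Finset.mem_Icc.mp (hP2 v hne)).1
    simp only [Finset.mem_filter, Fintype.mem_piFinset, Finset.mem_range]
    refine ⟨fun i => ?_, ?_, ?_⟩
    · have hle : P ((i : ℕ) + 1) ≤ ∑ v ∈ Finset.Icc 1 n, P v :=
        Finset.single_le_sum (f := fun v => P v) (fun _ _ => Nat.zero_le _)
          (Finset.mem_Icc.mpr ⟨by omega, by omega⟩)
      omega
    · rw [← sum_Icc_eq_sum_fin hmn P hP0]; exact hP1'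
    · rw [← sum_Icc_eq_sum_fin hmn (fun v => v * P v)
        (fun v hv => by simp [hP0 v hv])]
      exact hP3
  · intro p hp
    funext i
    exact phiMap_succ n k p i
  · intro P hP
    simp only [Finset.mem_filter, Finset.mem_piAntidiag] at hP
    obtain ⟨⟨hP1, hP2⟩, hP3⟩ := hP
    have hP1' : ∑ v ∈ Finset.Icc 1 n, P v = k := hP1
    have hP0 : ∀ v, ¬(1 ≤ v ∧ v ≤ n - k + 1) → P v = 0 := by
      intro v hv
      by_cases h1 : 1 ≤ v
      · by_cases h2 : v ≤ n
        · exact support_bound P hP1' hP3 v (by omega) h2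
        · by_contra hne
          exact h2 (Finset.mem_Icc.mp (hP2 v hne)).2
      · by_contra hne
        exact h1 (Finset.mem_Icc.mp (hP2 v hne)).1
    funext v
    show phiMap n k (fun i => P ((i : ℕ) + 1)) v = P v
    by_cases h : 1 ≤ v ∧ v ≤ n - k + 1
    · rw [phiMap, dif_pos h]
      show P (v - 1 + 1) = P v
      congr 1
      omega
    · rw [phiMap_zero n k _ v h, hP0 v h]
  · intro p hp
    simp only [Finset.mem_filter, Fintype.mem_piFinset, Finset.mem_range] at hp
    obtain ⟨hp1, hp2, hp3⟩ := hp
    have hsum : ∑ v ∈ Finset.Icc 1 n, phiMap n k p v = k := by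
      rw [sum_Icc_eq_sum_fin hmn _ (phiMap_zero n k p),
        Finset.sum_congr rfl (fun i _ => phiMap_succ n k p i)]
      exact hp2
    have hfact : ∏ v ∈ Finset.Icc 1 n, (((phiMap n k p v).factorial : ℂ))
        = ∏ i : Fin (n - k + 1), ((p i).factorial : ℂ) := by
      rw [prod_Icc_eq_prod_fin hmn (fun v => (((phiMap n k p v).factorial : ℂ)))
        (fun v hv => by simp [phiMap_zero n k p v hv])]
      exact Finset.prod_congr rfl (fun i _ => by rw [phiMap_succ n k p i])
    have hpow : ∏ v ∈ Finset.Icc 1 n, (x v / ((v.factorial : ℂ))) ^ phiMap n k p v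
        = ∏ i : Fin (n - k + 1), (x ((i : ℕ) + 1) / ((((i : ℕ) + 1).factorial : ℂ))) ^ p i := by
      rw [prod_Icc_eq_prod_fin hmn (fun v => (x v / ((v.factorial : ℂ))) ^ phiMap n k p v)
        (fun v hv => by simp [phiMap_zero n k p v hv])]
      exact Finset.prod_congr rfl (fun i _ => by rw [phiMap_succ n k p i])
    have hmulti : ((Nat.multinomial (Finset.Icc 1 n) (phiMap n k p) : ℕ) : ℂ)
        = (k.factorial : ℂ) / ∏ v ∈ Finset.Icc 1 n, (((phiMap n k p v).factorial : ℂ)) := by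
      have hspec := Nat.multinomial_spec (Finset.Icc 1 n) (phiMap n k p)
      rw [hsum] at hspec
      have hcast : (∏ v ∈ Finset.Icc 1 n, (((phiMap n k p v).factorial : ℂ)))
          * ((Nat.multinomial (Finset.Icc 1 n) (phiMap n k p) : ℕ) : ℂ) = (k.factorial : ℂ) := by
        rw [← Nat.cast_prod, ← Nat.cast_mul, hspec]
      have hne : (∏ v ∈ Finset.Icc 1 n, (((phiMap n k p v).factorial : ℂ))) ≠ 0 :=
        Finset.prod_ne_zero_iff.mpr (fun v _ => Nat.cast_ne_zero.mpr (Nat.factorial_ne_zero _))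
      field_simp
      linear_combination hcast
    rw [hmulti, hfact, hpow]
    have hkne : ((k.factorial : ℕ) : ℂ) ≠ 0 := Nat.cast_ne_zero.mpr (Nat.factorial_ne_zero _)
    have hpne : (∏ i : Fin (n - k + 1), ((p i).factorial : ℂ)) ≠ 0 :=
      Finset.prod_ne_zero_iff.mpr (fun v _ => Nat.cast_ne_zero.mpr (Nat.factorial_ne_zero _))
    conv_rhs => rw [← mul_assoc, _root_.div_mul_div_comm,
      mul_comm ((n.factorial : ℂ)) ((k.factorial : ℂ)), mul_div_mul_left _ _ hkne]

/-- build a composition of `n` from a tuple of positive parts summing to `n`. -/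
def mkComp (n k : ℕ) (f : Fin k → ℕ) : Composition n :=
  if h : (∀ j, 1 ≤ f j) ∧ (List.ofFn f).sum = n then
    { blocks := List.ofFn f
      blocks_pos := fun hi => by
        obtain ⟨j, hj⟩ := List.mem_ofFn.mp hi
        exact hj ▸ h.1 j
      blocks_sum := h.2 }
  else Composition.ones n

lemma comp_fiber (n k : ℕ) (y : ℕ → ℂ) :
    ∑ c ∈ Finset.univ.filter (fun c : Composition n => c.length = k),
        ∏ i, y (c.blocksFun i)
      = ∑ f ∈ (Fintype.piFinset fun _ : Fin k => Finset.Icc 1 n).filter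
            (fun f => ∑ i, f i = n), ∏ i, y (f i) := by
  refine Finset.sum_nbij' (fun c (i : Fin k) => c.blocks.getD i 0) (mkComp n k)
    ?_ ?_ ?_ ?_ ?_
  · intro c hc
    simp only [Finset.mem_filter, Finset.mem_univ, true_and] at hc
    subst hc
    have hbf : ∀ i : Fin c.length, c.blocks.getD (i : ℕ) 0 = c.blocksFun i := fun i => by
      simp [Composition.blocksFun, List.getD_eq_getElem c.blocks 0 i.isLt, List.get_eq_getElem]
    simp only [Finset.mem_filter, Fintype.mem_piFinset, Finset.mem_Icc]
    constructor
    · intro i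
      rw [hbf i]
      exact ⟨c.one_le_blocksFun i, c.blocksFun_le i⟩
    · simp only [hbf]
      exact c.sum_blocksFun
  · intro f hf
    simp only [Finset.mem_filter, Fintype.mem_piFinset, Finset.mem_Icc] at hf
    have hcond : (∀ j, 1 ≤ f j) ∧ (List.ofFn f).sum = n := by
      refine ⟨fun j => (hf.1 j).1, ?_⟩
      rw [List.sum_ofFn]; exact hf.2
    simp only [Finset.mem_filter, Finset.mem_univ, true_and]
    rw [mkComp, dif_pos hcond]
    simp [Composition.length]
  · intro c hc
    simp only [Finset.mem_filter, Finset.mem_univ, true_and] at hc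
    subst hc
    have hcond : (∀ j : Fin c.length, 1 ≤ c.blocks.getD j 0)
        ∧ (List.ofFn fun j : Fin c.length => c.blocks.getD j 0).sum = n := by
      constructor
      · intro j
        rw [List.getD_eq_getElem c.blocks 0 j.isLt]
        exact c.blocks_pos (List.getElem_mem _)
      · have hbf : ∀ i : Fin c.length, c.blocks.getD (i : ℕ) 0 = c.blocksFun i := fun i => by
          simp [Composition.blocksFun, List.getD_eq_getElem c.blocks 0 i.isLt, List.get_eq_getElem]
        rw [List.sum_ofFn]
        simp only [hbf]
        exact c.sum_blocksFun
    rw [mkComp, dif_pos hcond]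
    ext1
    show List.ofFn (fun j : Fin c.length => c.blocks.getD j 0) = c.blocks
    apply List.ext_getElem
    · simp [Composition.blocks_length]
    · intro i h1 h2
      simp [List.getD_eq_getElem c.blocks 0 h2]
  · intro f hf
    simp only [Finset.mem_filter, Fintype.mem_piFinset, Finset.mem_Icc] at hf
    have hcond : (∀ j, 1 ≤ f j) ∧ (List.ofFn f).sum = n := by
      refine ⟨fun j => (hf.1 j).1, ?_⟩
      rw [List.sum_ofFn]; exact hf.2
    funext i
    show (mkComp n k f).blocks.getD i 0 = f i
    rw [mkComp, dif_pos hcond]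
    show (List.ofFn f).getD i 0 = f i
    rw [List.getD_eq_getElem _ 0 (by simp [i.isLt])]
    simp
  · intro c hc
    simp only [Finset.mem_filter, Finset.mem_univ, true_and] at hc
    subst hc
    have hbf : ∀ i : Fin c.length, c.blocks.getD (i : ℕ) 0 = c.blocksFun i := fun i => by
      simp [Composition.blocksFun, List.getD_eq_getElem c.blocks 0 i.isLt, List.get_eq_getElem]
    simp only [hbf]

lemma comp_sum (n : ℕ) (hn : 1 ≤ n) (x : ℕ → ℂ) :
    (n.factorial : ℂ) * ∑ c : Composition n,
        (∏ i, (x (c.blocksFun i) / ((c.blocksFun i).factorial : ℂ)))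
          / ((c.length).factorial : ℂ)
      = ∑ k ∈ Finset.Icc 1 n, bellPoly n k x := by
  rw [← Finset.sum_fiberwise_of_maps_to (g := Composition.length)
    (t := Finset.range (n + 1))
    (fun c _ => Finset.mem_range.mpr (Nat.lt_succ_of_le c.length_le))]
  have step : ∀ k ∈ Finset.range (n + 1),
      ∑ c ∈ Finset.univ.filter (fun c : Composition n => c.length = k),
        (∏ i, (x (c.blocksFun i) / ((c.blocksFun i).factorial : ℂ)))
          / ((c.length).factorial : ℂ)
      = (((Sq n (fun v => x v / (v.factorial : ℂ))) ^ k).coeff n) / (k.factorial : ℂ) := by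
    intro k _
    rw [Finset.sum_congr rfl (fun c hc =>
      congrArg (fun t : ℕ => (∏ i, (x (c.blocksFun i) / ((c.blocksFun i).factorial : ℂ)))
          / ((t.factorial : ℂ))) (Finset.mem_filter.mp hc).2)]
    rw [← Finset.sum_div, comp_fiber n k (fun v => x v / (v.factorial : ℂ)),
      ← coeff_Sq_pow n k (fun v => x v / (v.factorial : ℂ))]
  rw [Finset.sum_congr rfl step]
  have hsplit : Finset.range (n + 1) = insert 0 (Finset.Icc 1 n) := by
    ext a; simp [Finset.mem_range, Finset.mem_Icc]; omega
  rw [hsplit, Finset.sum_insert (by simp), mul_add]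
  have h0 : ((Sq n (fun v => x v / (v.factorial : ℂ))) ^ 0).coeff n = 0 := by
    rw [pow_zero, Polynomial.coeff_one, if_neg (by omega)]
  rw [h0]
  simp only [zero_div, mul_zero, zero_add]
  rw [Finset.mul_sum]
  refine Finset.sum_congr rfl fun k hk => ?_
  rw [Finset.mem_Icc] at hk
  rw [bellPoly_eq_coeff n k hk.1 hk.2 x]
  ring

/-- For `g` analytic at `z` and `n ≥ 1`, the `n`-th derivative of `w ↦ exp(g(w))` at `z`
equals `exp(g(z)) · Σ_{k=1}^{n} B_{n,k}(g′(z), …, g⁽ⁿ⁻ᵏ⁺¹⁾(z))`. -/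
theorem iteratedDeriv_exp_comp_eq_sum_bellPoly (g : ℂ → ℂ) (z : ℂ)
    (hg : AnalyticAt ℂ g z) (n : ℕ) (hn : 1 ≤ n) :
    iteratedDeriv n (fun w => Complex.exp (g w)) z
      = Complex.exp (g z) *
          ∑ k ∈ Finset.Icc 1 n, bellPoly n k (fun j => iteratedDeriv j g z) := by

  obtain ⟨p, hp⟩ := hg
  obtain ⟨q, hq⟩ := (analyticAt_cexp (z := g z))
  have hcomp : HasFPowerSeriesAt (Complex.exp ∘ g) (q.comp p) z := hq.comp hp
  obtain ⟨rp, hpr⟩ := hp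
  obtain ⟨rq, hqr⟩ := hq
  obtain ⟨rc, hcr⟩ := hcomp
  have hfac : ∀ m : ℕ, ((m.factorial : ℕ) : ℂ) ≠ 0 :=
    fun m => Nat.cast_ne_zero.mpr (Nat.factorial_ne_zero m)
  have hpc : ∀ m : ℕ, p m (fun _ => 1) = iteratedDeriv m g z / (m.factorial : ℂ) := by
    intro m
    have e := hpr.factorial_smul (1 : ℂ) m
    rw [← iteratedDeriv_eq_iteratedFDeriv, nsmul_eq_mul] at e
    rw [eq_div_iff (hfac m), mul_comm]
    exact_mod_cast e
  have hqc : ∀ m : ℕ, q m (fun _ => 1) = Complex.exp (g z) / (m.factorial : ℂ) := by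
    intro m
    have e := hqr.factorial_smul (1 : ℂ) m
    rw [← iteratedDeriv_eq_iteratedFDeriv, iteratedDeriv_eq_iterate,
      Complex.iter_deriv_exp] at e
    rw [nsmul_eq_mul] at e
    rw [eq_div_iff (hfac m), mul_comm]
    exact_mod_cast e
  have ecomp : iteratedDeriv n (fun w => Complex.exp (g w)) z
      = ((n.factorial : ℕ) : ℂ) * (q.comp p) n (fun _ => 1) := by
    have e := hcr.factorial_smul (1 : ℂ) n
    rw [← iteratedDeriv_eq_iteratedFDeriv, nsmul_eq_mul] at e
    rw [show (fun w => Complex.exp (g w)) = Complex.exp ∘ g from rfl, ← e]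
  have diag : ∀ (k : ℕ) (w : Fin k → ℂ), q k w = (∏ i, w i) • q k (fun _ => 1) := by
    intro k w
    have e := (q k).map_smul_univ w (fun _ => (1 : ℂ))
    simpa [smul_eq_mul, mul_one] using e.symm
  have expand : (q.comp p) n (fun _ => 1)
      = ∑ c : Composition n,
          (∏ i, (iteratedDeriv (c.blocksFun i) g z / (((c.blocksFun i).factorial : ℕ) : ℂ)))
            * (Complex.exp (g z) / (((c.length).factorial : ℕ) : ℂ)) := by
    rw [FormalMultilinearSeries.comp, ContinuousMultilinearMap.sum_apply]
    refine Finset.sum_congr rfl fun c _ => ?_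
    rw [FormalMultilinearSeries.compAlongComposition_apply]
    have happ : p.applyComposition c (fun _ => 1) = fun i => p (c.blocksFun i) (fun _ => 1) := rfl
    rw [happ, diag c.length]
    simp only [hpc, hqc, smul_eq_mul]
  rw [ecomp, expand]
  rw [show (∑ c : Composition n,
        (∏ i, (iteratedDeriv (c.blocksFun i) g z / (((c.blocksFun i).factorial : ℕ) : ℂ)))
          * (Complex.exp (g z) / (((c.length).factorial : ℕ) : ℂ)))
      = Complex.exp (g z) * ∑ c : Composition n,
          (∏ i, (iteratedDeriv (c.blocksFun i) g z / (((c.blocksFun i).factorial : ℕ) : ℂ)))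
            / (((c.length).factorial : ℕ) : ℂ) from by
    rw [Finset.mul_sum]
    exact Finset.sum_congr rfl fun c _ => by ring]
  rw [← mul_assoc, mul_comm ((n.factorial : ℂ)) (Complex.exp (g z)), mul_assoc,
    comp_sum n hn (fun j => iteratedDeriv j g z)]
end

section
/- Let h : ℂ → ℂ be analytic at 0. Then the derivative of the function f(z) = h(z)·exp(−i/z) tends to 0 as z tends to 0 along the positive imaginary axis; that is, the limit as ε → 0⁺ of f′(iε) is 0. -/
open Filter Complex Set

/-- If `h` is analytic at `0`, then the derivative of `f(z) = h(z)·exp(−i/z)` tends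
to `0` as `z → 0` along the positive imaginary axis, i.e. `f′(iε) → 0` as `ε → 0⁺`. -/
theorem tendsto_deriv_exp_neg_inv_mul (h : ℂ → ℂ) (hh : AnalyticAt ℂ h 0) :
    Filter.Tendsto
      (fun ε : ℝ => deriv (fun z : ℂ => h z * Complex.exp (-Complex.I / z)) (Complex.I * ε))
      (nhdsWithin 0 (Set.Ioi 0)) (nhds 0) := by
  obtain ⟨s, hs, hsa⟩ := hh.exists_mem_nhds_analyticOnNhd
  -- the path ε ↦ I*ε tends to 0
  have t1 : Tendsto (fun ε : ℝ => Complex.I * (ε : ℂ)) (nhdsWithin 0 (Set.Ioi 0)) (nhds 0) := by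
    have : Tendsto (fun ε : ℝ => Complex.I * (ε : ℂ)) (nhds 0) (nhds 0) := by
      have hc : Continuous (fun ε : ℝ => Complex.I * (ε : ℂ)) := by fun_prop
      simpa using hc.tendsto (0 : ℝ)
    exact this.mono_left nhdsWithin_le_nhds
  -- explicit formula for the derivative along the path, eventually
  set G : ℝ → ℂ := fun ε =>
    deriv h (Complex.I * ε) * ((Real.exp (-ε⁻¹) : ℝ) : ℂ)
      + h (Complex.I * ε) * ((-Complex.I) * (((ε⁻¹) ^ 2 * Real.exp (-ε⁻¹) : ℝ) : ℂ)) with hG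
  have heq : ∀ᶠ ε : ℝ in nhdsWithin 0 (Set.Ioi 0),
      deriv (fun z : ℂ => h z * Complex.exp (-Complex.I / z)) (Complex.I * ε) = G ε := by
    filter_upwards [self_mem_nhdsWithin, t1.eventually hs] with ε hε hmem
    have hε' : (ε : ℝ) ≠ 0 := ne_of_gt hε
    set z : ℂ := Complex.I * ε with hzdef
    have hz : z ≠ 0 := by
      simp [hzdef, Complex.I_ne_zero, Complex.ofReal_eq_zero, hε']
    have hd : DifferentiableAt ℂ h z := (hsa z hmem).differentiableAt
    have hInv : HasDerivAt (fun w : ℂ => -Complex.I * w⁻¹)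
        (-Complex.I * -((z ^ 2)⁻¹)) z := (hasDerivAt_inv hz).const_mul _
    have hE := hInv.cexp
    have hf := hd.hasDerivAt.mul hE
    have hfun : (fun z : ℂ => h z * Complex.exp (-Complex.I / z))
        = fun w : ℂ => h w * Complex.exp (-Complex.I * w⁻¹) := by
      funext w; rw [div_eq_mul_inv]
    rw [hfun, (show HasDerivAt (fun w : ℂ => h w * Complex.exp (-Complex.I * w⁻¹)) _ z from hf).deriv]
    have e1 : -Complex.I * z⁻¹ = ((-ε⁻¹ : ℝ) : ℂ) := by
      rw [hzdef, mul_inv, Complex.inv_I]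
      push_cast
      have : Complex.I * Complex.I = -1 := Complex.I_mul_I
      field_simp
      rw [Complex.I_sq]; ring
    have e2 : -Complex.I * -((z ^ 2)⁻¹) = -Complex.I * (((ε⁻¹) ^ 2 : ℝ) : ℂ) := by
      rw [hzdef]
      have : (Complex.I * (ε : ℂ)) ^ 2 = -(ε : ℂ) ^ 2 := by
        rw [mul_pow, Complex.I_sq]; ring
      rw [this]
      push_cast
      field_simp
    rw [e1, e2, hG]
    have e3 : Complex.exp ((-ε⁻¹ : ℝ) : ℂ) = ((Real.exp (-ε⁻¹) : ℝ) : ℂ) := by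
      rw [Complex.ofReal_exp]
    rw [e3]
    push_cast
    ring
  refine Tendsto.congr' (heq.mono fun ε hε => hε.symm) ?_
  -- limits of the pieces
  have hinv : Tendsto (fun ε : ℝ => ε⁻¹) (nhdsWithin 0 (Set.Ioi 0)) atTop :=
    tendsto_inv_nhdsGT_zero
  have texp : Tendsto (fun ε : ℝ => Real.exp (-ε⁻¹)) (nhdsWithin 0 (Set.Ioi 0)) (nhds 0) :=
    (Real.tendsto_exp_atBot.comp (tendsto_neg_atTop_atBot.comp hinv))
  have tpoly : Tendsto (fun ε : ℝ => (ε⁻¹) ^ 2 * Real.exp (-ε⁻¹))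
      (nhdsWithin 0 (Set.Ioi 0)) (nhds 0) :=
    (Real.tendsto_pow_mul_exp_neg_atTop_nhds_zero 2).comp hinv
  have th : Tendsto (fun ε : ℝ => h (Complex.I * ε)) (nhdsWithin 0 (Set.Ioi 0)) (nhds (h 0)) :=
    ((hsa 0 (mem_of_mem_nhds hs)).continuousAt.tendsto).comp t1
  have th' : Tendsto (fun ε : ℝ => deriv h (Complex.I * ε)) (nhdsWithin 0 (Set.Ioi 0))
      (nhds (deriv h 0)) :=
    ((hsa.deriv 0 (mem_of_mem_nhds hs)).continuousAt.tendsto).comp t1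
  have texpC : Tendsto (fun ε : ℝ => ((Real.exp (-ε⁻¹) : ℝ) : ℂ)) (nhdsWithin 0 (Set.Ioi 0))
      (nhds 0) := by
    have := (Complex.continuous_ofReal.tendsto 0).comp texp
    simpa only [Function.comp_def, Complex.ofReal_zero] using this
  have tpolyC : Tendsto (fun ε : ℝ => (((ε⁻¹) ^ 2 * Real.exp (-ε⁻¹) : ℝ) : ℂ))
      (nhdsWithin 0 (Set.Ioi 0)) (nhds 0) := by
    have := (Complex.continuous_ofReal.tendsto 0).comp tpoly
    simpa only [Function.comp_def, Complex.ofReal_zero] using this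
  have hfin : Tendsto (fun ε : ℝ =>
      deriv h (Complex.I * ε) * ((Real.exp (-ε⁻¹) : ℝ) : ℂ)
        + h (Complex.I * ε) * ((-Complex.I) * (((ε⁻¹) ^ 2 * Real.exp (-ε⁻¹) : ℝ) : ℂ)))
      (nhdsWithin 0 (Set.Ioi 0)) (nhds (deriv h 0 * 0 + h 0 * (-Complex.I * 0))) :=
    (th'.mul texpC).add (th.mul (tendsto_const_nhds.mul tpolyC))
  rw [hG]
  simpa using hfin
end

section
/- Let f(w) = exp(−i/w) for w ≠ 0, and fix integers 1 ≤ k ≤ n. Then there exist complex coefficients c_{n+k}, …, c_{2n} such that for all z ≠ 0, exp(i·k/z) · B_{n,k}(f′(z), f″(z), …, f^{(n−k+1)}(z)) = Σ_{m=n+k}^{2n} c_m · z^{−m}; in particular, this function is a Laurent polynomial in 1/z whose terms all have degree at least n+k and at most 2n. -/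
open Finset Complex

/-- `g` agrees (off `0`) with a Laurent sum with degrees in `[a,b]`. -/
def IsL (a b : ℕ) (g : ℂ → ℂ) : Prop :=
  ∃ c : ℕ → ℂ, ∀ z : ℂ, z ≠ 0 → g z = ∑ m ∈ Finset.Icc a b, c m * z ^ (-(m : ℤ))

lemma isL_congr {a b : ℕ} {g h : ℂ → ℂ} (he : ∀ z : ℂ, z ≠ 0 → g z = h z)
    (hg : IsL a b g) : IsL a b h := by
  obtain ⟨c, hc⟩ := hg
  exact ⟨c, fun z hz => (he z hz).symm.trans (hc z hz)⟩

lemma isL_monomial (a : ℕ) (t : ℂ) : IsL a a (fun z => t * z ^ (-(a : ℤ))) := by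
  exact ⟨fun _ => t, fun z hz => by simp⟩

lemma isL_self (a b : ℕ) (c : ℕ → ℂ) :
    IsL a b (fun z => ∑ m ∈ Finset.Icc a b, c m * z ^ (-(m : ℤ))) :=
  ⟨c, fun _ _ => rfl⟩

lemma isL_mono {a b a' b' : ℕ} {g : ℂ → ℂ} (ha : a' ≤ a) (hb : b ≤ b')
    (h : IsL a b g) : IsL a' b' g := by
  obtain ⟨c, hc⟩ := h
  refine ⟨fun m => if m ∈ Finset.Icc a b then c m else 0, fun z hz => ?_⟩
  dsimp only
  rw [hc z hz]
  calc ∑ m ∈ Finset.Icc a b, c m * z ^ (-(m : ℤ))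
      = ∑ m ∈ Finset.Icc a b,
          (if m ∈ Finset.Icc a b then c m else 0) * z ^ (-(m : ℤ)) :=
        Finset.sum_congr rfl fun m hm => by rw [if_pos hm]
    _ = ∑ m ∈ Finset.Icc a' b',
          (if m ∈ Finset.Icc a b then c m else 0) * z ^ (-(m : ℤ)) :=
        Finset.sum_subset (Finset.Icc_subset_Icc ha hb)
          (fun m _ hm => by rw [if_neg hm, zero_mul])

lemma isL_smul {a b : ℕ} {g : ℂ → ℂ} (t : ℂ) (h : IsL a b g) :
    IsL a b (fun z => t * g z) := by
  obtain ⟨c, hc⟩ := h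
  refine ⟨fun m => t * c m, fun z hz => ?_⟩
  dsimp only
  rw [hc z hz, Finset.mul_sum]
  exact Finset.sum_congr rfl fun m _ => by ring

lemma isL_add {a b : ℕ} {g h : ℂ → ℂ} (hg : IsL a b g) (hh : IsL a b h) :
    IsL a b (fun z => g z + h z) := by
  obtain ⟨c, hc⟩ := hg
  obtain ⟨d, hd⟩ := hh
  refine ⟨fun m => c m + d m, fun z hz => ?_⟩
  dsimp only
  rw [hc z hz, hd z hz, ← Finset.sum_add_distrib]
  exact Finset.sum_congr rfl fun m _ => by ring

lemma isL_mul {a b a' b' : ℕ} {g h : ℂ → ℂ} (hg : IsL a b g) (hh : IsL a' b' h) :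
    IsL (a + a') (b + b') (fun z => g z * h z) := by
  obtain ⟨c, hc⟩ := hg
  obtain ⟨d, hd⟩ := hh
  refine ⟨fun q => ∑ p ∈ Finset.Icc a b ×ˢ Finset.Icc a' b',
    if p.1 + p.2 = q then c p.1 * d p.2 else 0, fun z hz => ?_⟩
  dsimp only
  rw [hc z hz, hd z hz, Finset.sum_mul_sum, ← Finset.sum_product']
  simp only [Finset.sum_mul]
  rw [Finset.sum_comm]
  refine Finset.sum_congr rfl fun p hp => ?_
  simp only [ite_mul, zero_mul]
  rw [Finset.sum_ite_eq (Finset.Icc (a + a') (b + b')) (p.1 + p.2)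
    (fun q => c p.1 * d p.2 * z ^ (-(q : ℤ)))]
  simp only [Finset.mem_product, Finset.mem_Icc] at hp
  rw [if_pos (Finset.mem_Icc.2 ⟨Nat.add_le_add hp.1.1 hp.2.1, Nat.add_le_add hp.1.2 hp.2.2⟩)]
  have : (-(↑(p.1 + p.2) : ℤ)) = (-(p.1 : ℤ)) + (-(p.2 : ℤ)) := by push_cast; ring
  rw [this, zpow_add₀ hz]
  ring

lemma isL_one : IsL 0 0 (fun _ => (1 : ℂ)) := by
  have := isL_monomial 0 1
  exact isL_congr (fun z hz => by simp) this

lemma isL_pow {a b : ℕ} {g : ℂ → ℂ} (h : IsL a b g) (p : ℕ) :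
    IsL (p * a) (p * b) (fun z => g z ^ p) := by
  induction p with
  | zero => simpa using isL_one
  | succ p ih =>
      have := isL_mul ih h
      refine isL_congr (fun z hz => by rw [pow_succ]) ?_
      simpa [Nat.succ_mul] using this

lemma isL_prod {ι : Type*} (s : Finset ι) (a b : ι → ℕ) (g : ι → ℂ → ℂ)
    (h : ∀ i ∈ s, IsL (a i) (b i) (g i)) :
    IsL (∑ i ∈ s, a i) (∑ i ∈ s, b i) (fun z => ∏ i ∈ s, g i z) := by
  induction s using Finset.cons_induction with
  | empty => simpa using isL_one
  | cons i s hi ih =>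
      simp only [Finset.prod_cons, Finset.sum_cons]
      exact isL_mul (h i (Finset.mem_cons_self i s))
        (ih fun j hj => h j (Finset.mem_cons_of_mem hj))

lemma isL_sum {ι : Type*} {a b : ℕ} (s : Finset ι) (g : ι → ℂ → ℂ)
    (h : ∀ i ∈ s, IsL a b (g i)) :
    IsL a b (fun z => ∑ i ∈ s, g i z) := by
  induction s using Finset.cons_induction with
  | empty => exact ⟨fun _ => 0, fun z hz => by simp⟩
  | cons i s hi ih =>
      simp only [Finset.sum_cons]
      exact isL_add (h i (Finset.mem_cons_self i s))
        (ih fun j hj => h j (Finset.mem_cons_of_mem hj))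

lemma hasDerivAt_E {z : ℂ} (hz : z ≠ 0) :
    HasDerivAt (fun w => Complex.exp (-Complex.I / w))
      (Complex.exp (-Complex.I / z) * (Complex.I * (z ^ 2)⁻¹)) z := by
  have h1 : HasDerivAt (fun w : ℂ => -Complex.I / w) (Complex.I * (z ^ 2)⁻¹) z := by
    have : HasDerivAt (fun y : ℂ => -Complex.I * y⁻¹) (-Complex.I * -(z ^ 2)⁻¹) z :=
      (hasDerivAt_inv hz).const_mul (-Complex.I)
    convert this using 1
    · funext w; ring
    ring
  simpa using h1.cexp

lemma isL_zpow (a : ℕ) : IsL a a (fun z : ℂ => z ^ (-(a : ℤ))) :=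
  isL_congr (fun z _ => one_mul _) (isL_monomial a 1)

lemma deriv_E_mul (a b : ℕ) (c : ℕ → ℂ) {z : ℂ} (hz : z ≠ 0) :
    deriv (fun w => Complex.exp (-Complex.I / w) *
        ∑ m ∈ Finset.Icc a b, c m * w ^ (-(m : ℤ))) z
      = Complex.exp (-Complex.I / z) *
        (Complex.I * z ^ (-(2 : ℤ)) * (∑ m ∈ Finset.Icc a b, c m * z ^ (-(m : ℤ)))
          + (∑ m ∈ Finset.Icc a b, (-(m : ℂ)) * c m * z ^ (-(m : ℤ))) * z ^ (-(1 : ℤ))) := by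
  have hS := HasDerivAt.fun_sum (u := Finset.Icc a b)
    (fun m _ => ((hasDerivAt_zpow (-(m : ℤ)) z (Or.inl hz)).const_mul (c m)))
  rw [((hasDerivAt_E hz).fun_mul hS).deriv]
  rw [mul_add]
  congr 1
  · have h2 : z ^ (-(2 : ℤ)) = (z ^ 2)⁻¹ := by
      rw [zpow_neg]; norm_cast
    rw [h2]; ring
  · rw [Finset.mul_sum, Finset.sum_mul, Finset.mul_sum]
    refine Finset.sum_congr rfl fun m _ => ?_
    rw [zpow_sub_one₀ hz, zpow_neg_one]
    push_cast
    ring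

lemma iter_rep (j : ℕ) : ∃ c : ℕ → ℂ, ∀ z : ℂ, z ≠ 0 →
    iteratedDeriv (j + 1) (fun w => Complex.exp (-Complex.I / w)) z
      = Complex.exp (-Complex.I / z) *
          ∑ m ∈ Finset.Icc (j + 2) (2 * j + 2), c m * z ^ (-(m : ℤ)) := by
  induction j with
  | zero =>
      refine ⟨fun _ => Complex.I, fun z hz => ?_⟩
      rw [iteratedDeriv_one, (hasDerivAt_E hz).deriv]
      norm_num [Finset.Icc_self, zpow_neg]
  | succ j ih =>
      obtain ⟨c, hc⟩ := ih
      have hL : IsL (j + 3) (2 * j + 4) (fun z : ℂ =>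
          Complex.I * z ^ (-(2 : ℤ)) *
              (∑ m ∈ Finset.Icc (j + 2) (2 * j + 2), c m * z ^ (-(m : ℤ)))
            + (∑ m ∈ Finset.Icc (j + 2) (2 * j + 2), (-(m : ℂ)) * c m * z ^ (-(m : ℤ)))
              * z ^ (-(1 : ℤ))) := by
        apply isL_add
        · exact isL_mono (by omega) (by omega)
            (isL_mul (isL_monomial 2 Complex.I) (isL_self (j + 2) (2 * j + 2) c))
        · exact isL_mono (by omega) (by omega)
            (isL_mul (isL_self (j + 2) (2 * j + 2) (fun m => (-(m : ℂ)) * c m))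
              (isL_zpow 1))
      obtain ⟨c', hc'⟩ := hL
      have hb : 2 * (j + 1) + 2 = 2 * j + 4 := by ring
      refine ⟨c', fun z hz => ?_⟩
      rw [hb, iteratedDeriv_succ]
      have hev : iteratedDeriv (j + 1) (fun w => Complex.exp (-Complex.I / w))
          =ᶠ[nhds z] fun w => Complex.exp (-Complex.I / w) *
            ∑ m ∈ Finset.Icc (j + 2) (2 * j + 2), c m * w ^ (-(m : ℤ)) := by
        filter_upwards [(isOpen_ne (x := (0 : ℂ))).mem_nhds hz] with w hw using hc w hw
      rw [hev.deriv_eq, deriv_E_mul (j + 2) (2 * j + 2) c hz, ← hc' z hz]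


/-- For `f(w) = exp(−i/w)` and `1 ≤ k ≤ n`, the function
`z ↦ exp(i k/z) · B_{n,k}(f′(z), …, f⁽ⁿ⁻ᵏ⁺¹⁾(z))` is a Laurent polynomial in `1/z`
whose terms all have degree at least `n + k` and at most `2n`. -/
theorem bellPoly_exp_neg_inv_laurent (n k : ℕ) (hk : 1 ≤ k) (hkn : k ≤ n) :
    ∃ c : ℕ → ℂ, ∀ z : ℂ, z ≠ 0 →
      Complex.exp (Complex.I * k / z) *
          bellPoly n k (fun j => iteratedDeriv j (fun w => Complex.exp (-Complex.I / w)) z)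
        = ∑ m ∈ Finset.Icc (n + k) (2 * n), c m * (z ^ m)⁻¹ := by
  choose C hC using iter_rep
  set S : ℕ → ℂ → ℂ := fun j z => ∑ m ∈ Finset.Icc (j + 2) (2 * j + 2), C j m * z ^ (-(m : ℤ))
    with hS
  set P : Finset (Fin (n - k + 1) → ℕ) := Finset.filter
      (fun p : Fin (n - k + 1) → ℕ =>
        (∑ i : Fin (n - k + 1), p i) = k ∧ (∑ i : Fin (n - k + 1), ((i : ℕ) + 1) * p i) = n)
      (Fintype.piFinset fun _ : Fin (n - k + 1) => Finset.range (n + 1)) with hP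
  have key : IsL (n + k) (2 * n) (fun z => Complex.exp (Complex.I * k / z) *
      bellPoly n k (fun j => iteratedDeriv j (fun w => Complex.exp (-Complex.I / w)) z)) := by
    apply isL_congr (g := fun z => ∑ p ∈ P,
      ((n.factorial : ℂ) / ∏ i : Fin (n - k + 1), ((p i).factorial : ℂ)) *
        ∏ i : Fin (n - k + 1), (S (i : ℕ) z * ((((i : ℕ) + 1).factorial : ℂ))⁻¹) ^ p i)
    · -- pointwise equality
      intro z hz
      rw [bellPoly, ← hP, Finset.mul_sum]
      refine (Finset.sum_congr rfl fun p hp => ?_).symm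
      obtain ⟨-, hk1, -⟩ := Finset.mem_filter.1 hp
      have h1 : ∀ i : Fin (n - k + 1),
          (iteratedDeriv ((i : ℕ) + 1) (fun w => Complex.exp (-Complex.I / w)) z /
              ((((i : ℕ) + 1).factorial : ℂ))) ^ p i
            = Complex.exp (-Complex.I / z) ^ p i *
              (S (i : ℕ) z * ((((i : ℕ) + 1).factorial : ℂ))⁻¹) ^ p i := by
        intro i
        rw [hC (i : ℕ) z hz, div_eq_mul_inv, mul_assoc, mul_pow]
      rw [Finset.prod_congr rfl fun i _ => h1 i, Finset.prod_mul_distrib,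
        Finset.prod_pow_eq_pow_sum, hk1]
      have hE : Complex.exp (Complex.I * k / z) * Complex.exp (-Complex.I / z) ^ k = 1 := by
        rw [← Complex.exp_nat_mul, ← Complex.exp_add]
        have h0 : Complex.I * k / z + k * (-Complex.I / z) = 0 := by ring
        rw [h0, Complex.exp_zero]
      have final : ∀ A B : ℂ,
          Complex.exp (Complex.I * k / z) * (A * (Complex.exp (-Complex.I / z) ^ k * B))
            = A * B := by
        intro A B
        calc Complex.exp (Complex.I * k / z) * (A * (Complex.exp (-Complex.I / z) ^ k * B))
            = (Complex.exp (Complex.I * k / z) * Complex.exp (-Complex.I / z) ^ k) * (A * B) := by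
              ring
          _ = A * B := by rw [hE, one_mul]
      exact final _ _
    · -- IsL of the nice sum
      apply isL_sum
      intro p hp
      obtain ⟨-, hk1, hn1⟩ := Finset.mem_filter.1 hp
      apply isL_smul
      have hin : ∀ i : Fin (n - k + 1),
          IsL ((i : ℕ) + 2) (2 * (i : ℕ) + 2)
            (fun z => S (i : ℕ) z * ((((i : ℕ) + 1).factorial : ℂ))⁻¹) := by
        intro i
        exact isL_congr (fun z _ => mul_comm _ _)
          (isL_smul _ (isL_self ((i : ℕ) + 2) (2 * (i : ℕ) + 2) (C (i : ℕ))))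
      have hprod := isL_prod Finset.univ
        (fun i : Fin (n - k + 1) => p i * ((i : ℕ) + 2))
        (fun i : Fin (n - k + 1) => p i * (2 * (i : ℕ) + 2))
        (fun i z => (S (i : ℕ) z * ((((i : ℕ) + 1).factorial : ℂ))⁻¹) ^ p i)
        (fun i _ => isL_pow (hin i) (p i))
      have hb1 : ∑ i : Fin (n - k + 1), p i * ((i : ℕ) + 2) = n + k := by
        calc ∑ i : Fin (n - k + 1), p i * ((i : ℕ) + 2)
            = ∑ i : Fin (n - k + 1), (((i : ℕ) + 1) * p i + p i) :=
              Finset.sum_congr rfl fun i _ => by ring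
          _ = n + k := by rw [Finset.sum_add_distrib, hn1, hk1]
      have hb2 : ∑ i : Fin (n - k + 1), p i * (2 * (i : ℕ) + 2) = 2 * n := by
        calc ∑ i : Fin (n - k + 1), p i * (2 * (i : ℕ) + 2)
            = ∑ i : Fin (n - k + 1), 2 * (((i : ℕ) + 1) * p i) :=
              Finset.sum_congr rfl fun i _ => by ring
          _ = 2 * n := by rw [← Finset.mul_sum, hn1]
      rwa [hb1, hb2] at hprod
  obtain ⟨c, hc⟩ := key
  refine ⟨c, fun z hz => ?_⟩
  exact (hc z hz).trans (Finset.sum_congr rfl fun m _ => by rw [zpow_neg, zpow_natCast])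
end

section
/- Let f(w) = exp(−i/w) for w ≠ 0, and for n ≥ 1 and z ≠ 0 define D_n(z) = −i · Σ_{k=1}^{n} (−1)^{k+1} · k! · B_{n,k}(f′(z), …, f^{(n−k+1)}(z)) · exp(i·k/z). Let Q ≥ 1 and let n₁, …, n_Q be positive integers with n₁ + ⋯ + n_Q = N. Then there exist complex coefficients c_{N+Q}, …, c_{2N} such that for all z ≠ 0, ∏_{j=1}^{Q} D_{n_j}(z)/(n_j!) = Σ_{m=N+Q}^{2N} c_m · z^{−m}, and the lowest-order coefficient satisfies c_{N+Q} = (−1)^{N+Q}. -/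
/-- The paper's quantity `D_n(f(z); z)` for `f(w) = exp(−i/w)`:
`D_n(z) = −i Σ_{k=1}^{n} (−1)^{k+1} k! B_{n,k}(f′(z), …, f⁽ⁿ⁻ᵏ⁺¹⁾(z)) · exp(i k/z)`,
where `1/(f(z) − f(0))^k` is interpreted as `exp(i k/z)` since `f(0) = 0` as a limit
along the positive imaginary axis. -/
noncomputable def Dfun (n : ℕ) (z : ℂ) : ℂ :=
  -Complex.I * ∑ k ∈ Finset.Icc 1 n,
    (-1 : ℂ) ^ (k + 1) * (k.factorial : ℂ) *
      bellPoly n k (fun j => iteratedDeriv j (fun w => Complex.exp (-Complex.I / w)) z) *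
      Complex.exp (Complex.I * k / z)

open Polynomial Finset Complex

def LBp (a : ℕ) (p : ℂ[X]) : Prop := ∀ m, m < a → p.coeff m = 0
def UBp (b : ℕ) (p : ℂ[X]) : Prop := ∀ m, b < m → p.coeff m = 0

noncomputable def Pp : ℕ → ℂ[X]
  | 0 => 1
  | (j + 1) => (Polynomial.C Complex.I * Pp j - derivative (Pp j)) * Polynomial.X ^ 2

/-- The filter of admissible tuples in the Bell polynomial. -/
noncomputable def bellSet (n k : ℕ) : Finset (Fin (n - k + 1) → ℕ) :=
  Finset.filter
    (fun p : Fin (n - k + 1) → ℕ =>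
      (∑ i : Fin (n - k + 1), p i) = k ∧ (∑ i : Fin (n - k + 1), ((i : ℕ) + 1) * p i) = n)
    (Fintype.piFinset fun _ : Fin (n - k + 1) => Finset.range (n + 1))

/-- The Bell polynomial of the `Pp` family, as a polynomial. -/
noncomputable def Bp (n k : ℕ) : ℂ[X] :=
  ∑ p ∈ bellSet n k,
    Polynomial.C ((n.factorial : ℂ) / ∏ i : Fin (n - k + 1), ((p i).factorial : ℂ)) *
      ∏ i : Fin (n - k + 1),
        (Polynomial.C ((((i : ℕ) + 1).factorial : ℂ))⁻¹ * Pp ((i : ℕ) + 1)) ^ p i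

noncomputable def Dp (n : ℕ) : ℂ[X] :=
  Polynomial.C (-Complex.I) * ∑ k ∈ Finset.Icc 1 n,
    Polynomial.C ((-1 : ℂ) ^ (k + 1) * (k.factorial : ℂ)) * Bp n k

lemma LBp.mono {a a' : ℕ} {p : ℂ[X]} (h : LBp a p) (hle : a' ≤ a) : LBp a' p :=
  fun m hm => h m (lt_of_lt_of_le hm hle)

lemma UBp.mono {b b' : ℕ} {p : ℂ[X]} (h : UBp b p) (hle : b ≤ b') : UBp b' p :=
  fun m hm => h m (lt_of_le_of_lt hle hm)

lemma LBp.C (c : ℂ) : LBp 0 (Polynomial.C c) := fun m hm => absurd hm (Nat.not_lt_zero m)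
lemma UBp.C (c : ℂ) : UBp 0 (Polynomial.C c) := by
  intro m hm
  rw [Polynomial.coeff_C, if_neg (by omega)]

lemma LBp.mul {a a' : ℕ} {p q : ℂ[X]} (h : LBp a p) (h' : LBp a' q) : LBp (a + a') (p * q) := by
  intro m hm
  rw [Polynomial.coeff_mul]
  refine Finset.sum_eq_zero fun x hx => ?_
  rw [Finset.HasAntidiagonal.mem_antidiagonal] at hx
  rcases lt_or_ge x.1 a with h1 | h1
  · rw [h x.1 h1, zero_mul]
  · rw [h' x.2 (by omega), mul_zero]

lemma UBp.mul {b b' : ℕ} {p q : ℂ[X]} (h : UBp b p) (h' : UBp b' q) : UBp (b + b') (p * q) := by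
  intro m hm
  rw [Polynomial.coeff_mul]
  refine Finset.sum_eq_zero fun x hx => ?_
  rw [Finset.HasAntidiagonal.mem_antidiagonal] at hx
  rcases lt_or_ge b x.1 with h1 | h1
  · rw [h x.1 h1, zero_mul]
  · rw [h' x.2 (by omega), mul_zero]

lemma coeff_mul_lb {a a' : ℕ} {p q : ℂ[X]} (h : LBp a p) (h' : LBp a' q) :
    (p * q).coeff (a + a') = p.coeff a * q.coeff a' := by
  rw [Polynomial.coeff_mul]
  refine Finset.sum_eq_single_of_mem (a, a') (Finset.HasAntidiagonal.mem_antidiagonal.2 rfl) ?_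
  rintro ⟨x, y⟩ hx hne
  rw [Finset.HasAntidiagonal.mem_antidiagonal] at hx
  simp only at hx ⊢
  rcases lt_or_ge x a with h1 | h1
  · rw [h x h1, zero_mul]
  · have : y < a' := by
      rcases lt_or_eq_of_le h1 with h2 | h2
      · omega
      · exact absurd (by simp [← h2]; omega) hne
    rw [h' y this, mul_zero]

lemma LBp.pow {a : ℕ} {p : ℂ[X]} (h : LBp a p) (e : ℕ) : LBp (e * a) (p ^ e) := by
  induction e with
  | zero => intro m hm; omega
  | succ e ih =>
      rw [pow_succ, Nat.succ_mul]
      exact ih.mul h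

lemma UBp.pow {b : ℕ} {p : ℂ[X]} (h : UBp b p) (e : ℕ) : UBp (e * b) (p ^ e) := by
  induction e with
  | zero =>
      intro m hm
      rw [pow_zero, Polynomial.coeff_one, if_neg (by omega)]
  | succ e ih =>
      rw [pow_succ, Nat.succ_mul]
      exact ih.mul h

lemma coeff_pow_lb {a : ℕ} {p : ℂ[X]} (h : LBp a p) (e : ℕ) :
    (p ^ e).coeff (e * a) = (p.coeff a) ^ e := by
  induction e with
  | zero => simp
  | succ e ih =>
      rw [pow_succ, Nat.succ_mul, coeff_mul_lb (h.pow e) h, ih, pow_succ]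

lemma LBp.prod {ι : Type*} (s : Finset ι) (f : ι → ℂ[X]) (a : ι → ℕ)
    (h : ∀ i ∈ s, LBp (a i) (f i)) : LBp (∑ i ∈ s, a i) (∏ i ∈ s, f i) := by
  induction s using Finset.cons_induction with
  | empty =>
      intro m hm
      simp at hm
  | cons i s his ih =>
      rw [Finset.prod_cons, Finset.sum_cons]
      exact (h i (Finset.mem_cons_self i s)).mul (ih fun j hj => h j (Finset.mem_cons_of_mem hj))

lemma UBp.prod {ι : Type*} (s : Finset ι) (f : ι → ℂ[X]) (b : ι → ℕ)
    (h : ∀ i ∈ s, UBp (b i) (f i)) : UBp (∑ i ∈ s, b i) (∏ i ∈ s, f i) := by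
  induction s using Finset.cons_induction with
  | empty =>
      intro m hm
      rw [Finset.prod_empty, Polynomial.coeff_one, if_neg (by omega)]
  | cons i s his ih =>
      rw [Finset.prod_cons, Finset.sum_cons]
      exact (h i (Finset.mem_cons_self i s)).mul (ih fun j hj => h j (Finset.mem_cons_of_mem hj))

lemma coeff_prod_lb {ι : Type*} (s : Finset ι) (f : ι → ℂ[X]) (a : ι → ℕ)
    (h : ∀ i ∈ s, LBp (a i) (f i)) :
    (∏ i ∈ s, f i).coeff (∑ i ∈ s, a i) = ∏ i ∈ s, (f i).coeff (a i) := by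
  induction s using Finset.cons_induction with
  | empty => simp
  | cons i s his ih =>
      rw [Finset.prod_cons, Finset.sum_cons,
        coeff_mul_lb (h i (Finset.mem_cons_self i s))
          (LBp.prod s f a fun j hj => h j (Finset.mem_cons_of_mem hj)),
        ih fun j hj => h j (Finset.mem_cons_of_mem hj), Finset.prod_cons]

lemma LBp.sum {ι : Type*} (s : Finset ι) (f : ι → ℂ[X]) (a : ℕ)
    (h : ∀ i ∈ s, LBp a (f i)) : LBp a (∑ i ∈ s, f i) := by
  intro m hm
  rw [Polynomial.finset_sum_coeff]
  exact Finset.sum_eq_zero fun i hi => h i hi m hm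

lemma UBp.sum {ι : Type*} (s : Finset ι) (f : ι → ℂ[X]) (b : ℕ)
    (h : ∀ i ∈ s, UBp b (f i)) : UBp b (∑ i ∈ s, f i) := by
  intro m hm
  rw [Polynomial.finset_sum_coeff]
  exact Finset.sum_eq_zero fun i hi => h i hi m hm

/-- evaluation of a support-bounded polynomial as an interval sum -/
lemma eval_eq_Icc_sum {a b : ℕ} {p : ℂ[X]} (h : LBp a p) (h' : UBp b p) (x : ℂ) :
    p.eval x = ∑ m ∈ Finset.Icc a b, p.coeff m * x ^ m := by
  rw [Polynomial.eval_eq_sum, Polynomial.sum]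
  refine Finset.sum_subset ?_ ?_
  · intro m hm
    rw [Polynomial.mem_support_iff] at hm
    rw [Finset.mem_Icc]
    constructor
    · by_contra hc; exact hm (h m (by omega))
    · by_contra hc; exact hm (h' m (by omega))
  · intro m _ hm
    rw [Polynomial.notMem_support_iff.1 hm, zero_mul]

lemma evalPp (j : ℕ) (z : ℂ) (hz : z ≠ 0) :
    iteratedDeriv j (fun w => Complex.exp (-Complex.I / w)) z
      = Complex.exp (-Complex.I / z) * (Pp j).eval z⁻¹ := by
  induction j generalizing z with
  | zero => simp [Pp]
  | succ j ih =>
      rw [iteratedDeriv_succ]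
      have hev : iteratedDeriv j (fun w => Complex.exp (-Complex.I / w))
          =ᶠ[nhds z] fun w => Complex.exp (-Complex.I / w) * (Pp j).eval w⁻¹ := by
        filter_upwards [compl_singleton_mem_nhds hz] with w hw
        exact ih w hw
      rw [hev.deriv_eq]
      have h1 : HasDerivAt (fun w : ℂ => w⁻¹) (-(z ^ 2)⁻¹) z := hasDerivAt_inv hz
      have h2 : HasDerivAt (fun w : ℂ => -Complex.I / w) (-Complex.I * -(z ^ 2)⁻¹) z := by
        simpa only [div_eq_mul_inv] using h1.const_mul (-Complex.I)
      have h3 : HasDerivAt (fun w : ℂ => Complex.exp (-Complex.I / w))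
          (Complex.exp (-Complex.I / z) * (-Complex.I * -(z ^ 2)⁻¹)) z := h2.cexp
      have h4 : HasDerivAt (fun w : ℂ => (Pp j).eval w⁻¹)
          (eval z⁻¹ (derivative (Pp j)) * -(z ^ 2)⁻¹) z :=
        HasDerivAt.comp z ((Pp j).hasDerivAt z⁻¹) h1
      have h5 : HasDerivAt (fun w : ℂ => Complex.exp (-Complex.I / w) * (Pp j).eval w⁻¹) _ z := h3.mul h4
      rw [h5.deriv]
      have hz2 : (z ^ 2) ≠ 0 := pow_ne_zero 2 hz
      simp only [Pp, eval_mul, eval_sub, eval_pow, eval_X, eval_C, inv_pow]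
      field_simp
      ring

lemma Pp_succ_coeff (j m : ℕ) : (Pp (j + 1)).coeff m =
    if 2 ≤ m then Complex.I * (Pp j).coeff (m - 2) - (Pp j).coeff (m - 1) * (((m - 2 : ℕ) : ℂ) + 1)
    else 0 := by
  show ((Polynomial.C Complex.I * Pp j - derivative (Pp j)) * Polynomial.X ^ 2).coeff m = _
  rw [Polynomial.coeff_mul_X_pow']
  rcases le_or_gt 2 m with h | h
  · rw [if_pos h, if_pos h, Polynomial.coeff_sub, Polynomial.coeff_C_mul,
      Polynomial.coeff_derivative, show m - 2 + 1 = m - 1 from by omega]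
  · rw [if_neg (by omega), if_neg (by omega)]

lemma Pp_UB (j : ℕ) : UBp (2 * j) (Pp j) := by
  induction j with
  | zero =>
      intro m hm
      show (1 : ℂ[X]).coeff m = 0
      rw [Polynomial.coeff_one, if_neg (by omega)]
  | succ j ih =>
      intro m hm
      rw [Pp_succ_coeff]
      rcases le_or_gt 2 m with h | h
      · rw [if_pos h, ih (m - 2) (by omega), ih (m - 1) (by omega)]
        ring
      · rw [if_neg (by omega)]

lemma Pp_LB (j : ℕ) (hj : 1 ≤ j) : LBp (j + 1) (Pp j) := by
  induction j, hj using Nat.le_induction with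
  | base =>
      intro m hm
      rw [Pp_succ_coeff, if_neg (by omega)]
  | succ j hj ih =>
      intro m hm
      rw [Pp_succ_coeff]
      rcases le_or_gt 2 m with h | h
      · rw [if_pos h, ih (m - 2) (by omega), ih (m - 1) (by omega)]
        ring
      · rw [if_neg (by omega)]

lemma Pp_coeff_trailing (j : ℕ) (hj : 1 ≤ j) :
    (Pp j).coeff (j + 1) = (-1 : ℂ) ^ (j + 1) * (j.factorial : ℂ) * Complex.I := by
  induction j, hj using Nat.le_induction with
  | base =>
      rw [Pp_succ_coeff, if_pos (by omega)]
      show Complex.I * (1 : ℂ[X]).coeff 0 - (1 : ℂ[X]).coeff 1 * ((((2:ℕ) - 2 : ℕ) : ℂ) + 1) = _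
      rw [Polynomial.coeff_one, Polynomial.coeff_one]
      norm_num [Nat.factorial]
  | succ j hj ih =>
      rw [Pp_succ_coeff, if_pos (by omega)]
      have h0 : (Pp j).coeff (j + 2 - 2) = 0 := Pp_LB j hj _ (by omega)
      have h1 : (j + 2 - 1) = j + 1 := by omega
      have h2 : (j + 2 - 2 : ℕ) = j := by omega
      rw [h0, h1, h2, ih, Nat.factorial_succ]
      push_cast
      ring

-- PART 5 (appended to combined file for testing): Bp eval, bounds, coefficients

lemma bell_eval (n k : ℕ) (z : ℂ) (hz : z ≠ 0) :
    bellPoly n k (fun j => iteratedDeriv j (fun w => Complex.exp (-Complex.I / w)) z) *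
        Complex.exp (Complex.I * k / z)
      = (Bp n k).eval z⁻¹ := by
  rw [bellPoly, Bp, Polynomial.eval_finset_sum, Finset.sum_mul, bellSet]
  refine Finset.sum_congr rfl fun p hp => ?_
  rw [Finset.mem_filter] at hp
  obtain ⟨-, hp1, hp2⟩ := hp
  have hfac : ∀ i : Fin (n - k + 1),
      (iteratedDeriv ((i : ℕ) + 1) (fun w => Complex.exp (-Complex.I / w)) z /
          ((((i : ℕ) + 1).factorial : ℂ))) ^ p i
        = Complex.exp (-Complex.I / z) ^ p i *
            (((((i : ℕ) + 1).factorial : ℂ))⁻¹ * (Pp ((i : ℕ) + 1)).eval z⁻¹) ^ p i := by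
    intro i
    rw [evalPp _ z hz, ← mul_pow]
    congr 1
    ring
  rw [Finset.prod_congr rfl fun i _ => hfac i, Finset.prod_mul_distrib,
    Finset.prod_pow_eq_pow_sum, hp1]
  have hek : Complex.exp (-Complex.I / z) ^ k * Complex.exp (Complex.I * k / z) = 1 := by
    rw [← Complex.exp_nat_mul, ← Complex.exp_add, ← Complex.exp_zero]
    congr 1
    field_simp
    ring
  simp only [Polynomial.eval_mul, Polynomial.eval_prod, Polynomial.eval_pow,
    Polynomial.eval_C]
  calc (↑n.factorial / ∏ i : Fin (n - k + 1), ((p i).factorial : ℂ)) *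
      (Complex.exp (-Complex.I / z) ^ k *
        ∏ i : Fin (n - k + 1), (((((i : ℕ) + 1).factorial : ℂ))⁻¹ * (Pp ((i : ℕ) + 1)).eval z⁻¹) ^ p i) *
      Complex.exp (Complex.I * ↑k / z)
      = (↑n.factorial / ∏ i : Fin (n - k + 1), ((p i).factorial : ℂ)) *
        (∏ i : Fin (n - k + 1), (((((i : ℕ) + 1).factorial : ℂ))⁻¹ * (Pp ((i : ℕ) + 1)).eval z⁻¹) ^ p i) *
        (Complex.exp (-Complex.I / z) ^ k * Complex.exp (Complex.I * ↑k / z)) := by ring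
    _ = _ := by rw [hek, mul_one]

lemma Bp_LB (n k : ℕ) : LBp (n + k) (Bp n k) := by
  refine LBp.sum _ _ _ fun p hp => ?_
  rw [bellSet, Finset.mem_filter] at hp
  obtain ⟨-, hp1, hp2⟩ := hp
  have hfac : ∀ i ∈ (Finset.univ : Finset (Fin (n - k + 1))),
      LBp (p i * ((i : ℕ) + 2))
        ((Polynomial.C ((((i : ℕ) + 1).factorial : ℂ))⁻¹ * Pp ((i : ℕ) + 1)) ^ p i) := by
    intro i _
    have h0 : LBp ((i : ℕ) + 2)
        (Polynomial.C ((((i : ℕ) + 1).factorial : ℂ))⁻¹ * Pp ((i : ℕ) + 1)) := by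
      have := (LBp.C ((((i : ℕ) + 1).factorial : ℂ))⁻¹).mul (Pp_LB ((i : ℕ) + 1) (by omega))
      rw [zero_add] at this
      exact this
    exact h0.pow (p i)
  have h2 := LBp.prod Finset.univ _ _ hfac
  have h3 := (LBp.C ((n.factorial : ℂ) / ∏ i : Fin (n - k + 1), ((p i).factorial : ℂ))).mul h2
  rw [zero_add] at h3
  refine h3.mono (le_of_eq ?_)
  calc n + k = (∑ i : Fin (n - k + 1), ((i : ℕ) + 1) * p i) + ∑ i : Fin (n - k + 1), p i := by
        rw [hp1, hp2]
    _ = ∑ i : Fin (n - k + 1), (((i : ℕ) + 1) * p i + p i) := by rw [Finset.sum_add_distrib]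
    _ = ∑ i : Fin (n - k + 1), p i * ((i : ℕ) + 2) := by
        refine Finset.sum_congr rfl fun i _ => ?_
        ring

lemma Bp_UB (n k : ℕ) : UBp (2 * n) (Bp n k) := by
  refine UBp.sum _ _ _ fun p hp => ?_
  rw [bellSet, Finset.mem_filter] at hp
  obtain ⟨-, hp1, hp2⟩ := hp
  have hfac : ∀ i ∈ (Finset.univ : Finset (Fin (n - k + 1))),
      UBp (p i * (2 * ((i : ℕ) + 1)))
        ((Polynomial.C ((((i : ℕ) + 1).factorial : ℂ))⁻¹ * Pp ((i : ℕ) + 1)) ^ p i) := by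
    intro i _
    have h0 : UBp (2 * ((i : ℕ) + 1))
        (Polynomial.C ((((i : ℕ) + 1).factorial : ℂ))⁻¹ * Pp ((i : ℕ) + 1)) := by
      have := (UBp.C ((((i : ℕ) + 1).factorial : ℂ))⁻¹).mul (Pp_UB ((i : ℕ) + 1))
      rw [zero_add] at this
      exact this
    exact h0.pow (p i)
  have h2 := UBp.prod Finset.univ _ _ hfac
  have h3 := (UBp.C ((n.factorial : ℂ) / ∏ i : Fin (n - k + 1), ((p i).factorial : ℂ))).mul h2
  rw [zero_add] at h3
  refine h3.mono (le_of_eq ?_)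
  calc ∑ i : Fin (n - k + 1), p i * (2 * ((i : ℕ) + 1))
      = 2 * ∑ i : Fin (n - k + 1), ((i : ℕ) + 1) * p i := by
        rw [Finset.mul_sum]
        exact Finset.sum_congr rfl fun i _ => by ring
    _ = 2 * n := by rw [hp2]

lemma bellSet_one (n : ℕ) (hn : 1 ≤ n) :
    bellSet n 1 = {fun i : Fin (n - 1 + 1) => if (i : ℕ) = n - 1 then 1 else 0} := by
  rw [Finset.eq_singleton_iff_unique_mem]
  constructor
  · rw [bellSet, Finset.mem_filter]
    refine ⟨?_, ?_, ?_⟩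
    · rw [Fintype.mem_piFinset]
      intro i
      rw [Finset.mem_range]
      split <;> omega
    · rw [Finset.sum_eq_single_of_mem (⟨n - 1, by omega⟩ : Fin (n - 1 + 1))
        (Finset.mem_univ _) (fun j _ hjne => by
          rw [if_neg (fun hc => hjne (Fin.ext (by simpa using hc)))])]
      simp
    · rw [Finset.sum_eq_single_of_mem (⟨n - 1, by omega⟩ : Fin (n - 1 + 1))
        (Finset.mem_univ _) (fun j _ hjne => by
          show ((j : ℕ) + 1) * (if (j : ℕ) = n - 1 then 1 else 0) = 0
          rw [if_neg (fun hc => hjne (Fin.ext (by simpa using hc))), mul_zero])]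
      simp
      omega
  · intro q hq
    rw [bellSet, Finset.mem_filter] at hq
    obtain ⟨-, hq1, hq2⟩ := hq
    obtain ⟨i₁, -, hi₁⟩ := Finset.exists_ne_zero_of_sum_ne_zero (by rw [hq1]; omega :
      ∑ i : Fin (n - 1 + 1), q i ≠ 0)
    have hsum1 : q i₁ + ∑ i ∈ Finset.univ.erase i₁, q i = 1 := by
      rw [Finset.add_sum_erase _ _ (Finset.mem_univ i₁), hq1]
    have hq₁1 : q i₁ = 1 := by omega
    have hrest : ∀ j ∈ Finset.univ.erase i₁, q j = 0 := by
      intro j hj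
      have h0 : ∑ i ∈ Finset.univ.erase i₁, q i = 0 := by omega
      exact (Finset.sum_eq_zero_iff).1 h0 j hj
    have hval' : ∑ i : Fin (n - 1 + 1), ((i : ℕ) + 1) * q i = ((i₁ : ℕ) + 1) * q i₁ :=
      Finset.sum_eq_single_of_mem i₁ (Finset.mem_univ i₁) fun j _ hjne => by
        rw [hrest j (Finset.mem_erase.2 ⟨hjne, Finset.mem_univ j⟩), mul_zero]
    have hval : ((i₁ : ℕ) + 1) = n := by
      rw [hval', hq₁1, mul_one] at hq2
      exact hq2
    funext i
    rcases eq_or_ne i i₁ with h | h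
    · rw [h, hq₁1, if_pos (by omega)]
    · rw [hrest i (Finset.mem_erase.2 ⟨h, Finset.mem_univ i⟩), if_neg ?_]
      intro hc
      apply h
      apply Fin.ext
      omega

lemma Bp_one_coeff (n : ℕ) (hn : 1 ≤ n) :
    (Bp n 1).coeff (n + 1) = (-1 : ℂ) ^ (n + 1) * (n.factorial : ℂ) * Complex.I := by
  have hn1 : n - 1 + 1 = n := by omega
  rw [Bp, bellSet_one n hn, Finset.sum_singleton]
  have hfact : ∏ i : Fin (n - 1 + 1),
      ((((fun i : Fin (n - 1 + 1) => if (i : ℕ) = n - 1 then 1 else 0) i) : ℕ).factorial : ℂ) = 1 :=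
    Finset.prod_eq_one fun i _ => by
      show ((if (i : ℕ) = n - 1 then 1 else 0 : ℕ).factorial : ℂ) = 1
      split <;> simp [Nat.factorial]
  have hprod : ∏ i : Fin (n - 1 + 1),
      (Polynomial.C ((((i : ℕ) + 1).factorial : ℂ))⁻¹ * Pp ((i : ℕ) + 1)) ^
        ((fun i : Fin (n - 1 + 1) => if (i : ℕ) = n - 1 then 1 else 0) i)
      = Polynomial.C (((n - 1 + 1).factorial : ℂ))⁻¹ * Pp (n - 1 + 1) := by
    rw [Finset.prod_eq_single_of_mem (⟨n - 1, by omega⟩ : Fin (n - 1 + 1)) (Finset.mem_univ _)]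
    · show (Polynomial.C (((n - 1 + 1).factorial : ℂ))⁻¹ * Pp (n - 1 + 1)) ^
        (if n - 1 = n - 1 then 1 else 0) = _
      rw [if_pos rfl, pow_one]
    · intro j _ hjne
      show (Polynomial.C ((((j : ℕ) + 1).factorial : ℂ))⁻¹ * Pp ((j : ℕ) + 1)) ^
        (if (j : ℕ) = n - 1 then 1 else 0) = 1
      rw [if_neg (fun hc => hjne (Fin.ext (by simpa using hc))), pow_zero]
  rw [hfact, hprod, hn1]
  rw [Polynomial.coeff_C_mul, Polynomial.coeff_C_mul, Pp_coeff_trailing n hn]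
  have hne : ((n.factorial : ℂ)) ≠ 0 := Nat.cast_ne_zero.2 (Nat.factorial_ne_zero n)
  field_simp

lemma Dfun_eval (n : ℕ) (z : ℂ) (hz : z ≠ 0) : Dfun n z = (Dp n).eval z⁻¹ := by
  rw [Dfun, Dp, Polynomial.eval_mul, Polynomial.eval_C, Polynomial.eval_finset_sum]
  congr 1
  refine Finset.sum_congr rfl fun k hk => ?_
  rw [Polynomial.eval_mul, Polynomial.eval_C, ← bell_eval n k z hz]
  ring

lemma Dp_LB (n : ℕ) (hn : 1 ≤ n) : LBp (n + 1) (Dp n) := by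
  have hsum : LBp (n + 1) (∑ k ∈ Finset.Icc 1 n,
      Polynomial.C ((-1 : ℂ) ^ (k + 1) * (k.factorial : ℂ)) * Bp n k) := by
    refine LBp.sum _ _ _ fun k hk => ?_
    rw [Finset.mem_Icc] at hk
    have := (LBp.C ((-1 : ℂ) ^ (k + 1) * (k.factorial : ℂ))).mul (Bp_LB n k)
    rw [zero_add] at this
    exact this.mono (by omega)
  have := (LBp.C (-Complex.I)).mul hsum
  rw [zero_add] at this
  exact this

lemma Dp_UB (n : ℕ) : UBp (2 * n) (Dp n) := by
  have hsum : UBp (2 * n) (∑ k ∈ Finset.Icc 1 n,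
      Polynomial.C ((-1 : ℂ) ^ (k + 1) * (k.factorial : ℂ)) * Bp n k) := by
    refine UBp.sum _ _ _ fun k hk => ?_
    have := (UBp.C ((-1 : ℂ) ^ (k + 1) * (k.factorial : ℂ))).mul (Bp_UB n k)
    rw [zero_add] at this
    exact this
  have := (UBp.C (-Complex.I)).mul hsum
  rw [zero_add] at this
  exact this

lemma Dp_coeff (n : ℕ) (hn : 1 ≤ n) :
    (Dp n).coeff (n + 1) = (-1 : ℂ) ^ (n + 1) * (n.factorial : ℂ) := by
  rw [Dp, Polynomial.coeff_C_mul, Polynomial.finset_sum_coeff,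
    Finset.sum_eq_single_of_mem 1 (Finset.mem_Icc.2 ⟨le_refl 1, hn⟩)]
  · rw [Polynomial.coeff_C_mul, Bp_one_coeff n hn]
    simp only [Nat.factorial_one, Nat.cast_one]
    ring_nf
    rw [Complex.I_sq]
    ring
  · intro k hk hkne
    rw [Finset.mem_Icc] at hk
    rw [Polynomial.coeff_C_mul, Bp_LB n k (n + 1) (by omega), mul_zero]


/-- For positive integers `n₁, …, n_Q` with `n₁ + ⋯ + n_Q = N`, the product
`∏ⱼ D_{nⱼ}(z)/(nⱼ!)` is a Laurent polynomial in `1/z` with terms of degree between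
`N + Q` and `2N`, whose lowest-order coefficient is `(−1)^{N+Q}`. -/
theorem prod_Dfun_laurent (Q N : ℕ) (hQ : 1 ≤ Q) (n : Fin Q → ℕ)
    (hn : ∀ j, 1 ≤ n j) (hsum : ∑ j, n j = N) :
    ∃ c : ℕ → ℂ,
      (∀ z : ℂ, z ≠ 0 →
        ∏ j, Dfun (n j) z / ((n j).factorial : ℂ)
          = ∑ m ∈ Finset.Icc (N + Q) (2 * N), c m * (z ^ m)⁻¹)
      ∧ c (N + Q) = (-1 : ℂ) ^ (N + Q) := by
  classical
  set F : ℂ[X] := ∏ j : Fin Q, (Polynomial.C (((n j).factorial : ℂ))⁻¹ * Dp (n j)) with hF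
  have hfacLB : ∀ j ∈ (Finset.univ : Finset (Fin Q)),
      LBp (n j + 1) (Polynomial.C (((n j).factorial : ℂ))⁻¹ * Dp (n j)) := by
    intro j _
    have := (LBp.C (((n j).factorial : ℂ))⁻¹).mul (Dp_LB (n j) (hn j))
    rwa [zero_add] at this
  have hfacUB : ∀ j ∈ (Finset.univ : Finset (Fin Q)),
      UBp (2 * n j) (Polynomial.C (((n j).factorial : ℂ))⁻¹ * Dp (n j)) := by
    intro j _
    have := (UBp.C (((n j).factorial : ℂ))⁻¹).mul (Dp_UB (n j))
    rwa [zero_add] at this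
  have hNQ : (∑ j : Fin Q, (n j + 1)) = N + Q := by
    rw [Finset.sum_add_distrib, hsum, Finset.sum_const, Finset.card_univ, Fintype.card_fin,
      smul_eq_mul, mul_one]
  have h2N : (∑ j : Fin Q, 2 * n j) = 2 * N := by
    rw [← Finset.mul_sum, hsum]
  have hLB : LBp (N + Q) F := by
    have := LBp.prod Finset.univ _ _ hfacLB
    rwa [hNQ] at this
  have hUB : UBp (2 * N) F := by
    have := UBp.prod Finset.univ _ _ hfacUB
    rwa [h2N] at this
  refine ⟨F.coeff, ?_, ?_⟩
  · intro z hz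
    have hev : ∏ j, Dfun (n j) z / ((n j).factorial : ℂ) = F.eval z⁻¹ := by
      rw [hF, Polynomial.eval_prod]
      refine Finset.prod_congr rfl fun j _ => ?_
      rw [Polynomial.eval_mul, Polynomial.eval_C, ← Dfun_eval (n j) z hz, div_eq_inv_mul]
    rw [hev, eval_eq_Icc_sum hLB hUB z⁻¹]
    exact Finset.sum_congr rfl fun m _ => by rw [inv_pow]
  · rw [hF, ← hNQ, coeff_prod_lb Finset.univ _ _ hfacLB]
    have hterm : ∀ j : Fin Q,
        (Polynomial.C (((n j).factorial : ℂ))⁻¹ * Dp (n j)).coeff (n j + 1)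
          = (-1 : ℂ) ^ (n j + 1) := by
      intro j
      have hne : (((n j).factorial : ℂ)) ≠ 0 := Nat.cast_ne_zero.2 (Nat.factorial_ne_zero _)
      rw [Polynomial.coeff_C_mul, Dp_coeff (n j) (hn j)]
      field_simp
    rw [Finset.prod_congr rfl fun j _ => hterm j, Finset.prod_pow_eq_pow_sum, hNQ]
end

section
/- For complex numbers x and y with |x| < 1 and |y| < 1, the infinite product ∏_{n=1}^{∞} (1 − y·xⁿ)⁻¹ converges, the double series Σ_{N=0}^{∞} Σ_{k=0}^{N} λ(N|k)·x^N·y^k converges absolutely, and the two are equal: ∏_{n=1}^{∞} (1 − y·xⁿ)⁻¹ = Σ_{N=0}^{∞} Σ_{k=0}^{N} λ(N|k)·x^N·y^k. -/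
open Finset
set_option maxHeartbeats 1000000

noncomputable section
namespace PartGF

/-- number of partitions of `N` into `k` parts, all parts at most `M`. -/
def Q (M N k : ℕ) : ℕ :=
  (Finset.univ.filter fun P : Nat.Partition N =>
    P.parts.card = k ∧ ∀ j ∈ P.parts, j ≤ M).card

/-- multiplicity vector to (total, number of parts) -/
def Φ (M : ℕ) (f : Fin M → ℕ) : ℕ × ℕ :=
  (∑ i : Fin M, ((i : ℕ) + 1) * f i, ∑ i : Fin M, f i)

lemma card_le_of_partition {N : ℕ} (P : Nat.Partition N) : P.parts.card ≤ N := by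
  have := Multiset.card_nsmul_le_sum (s := P.parts) (a := 1) (fun x hx => P.parts_pos hx)
  simpa [P.parts_sum] using this

lemma parts_le_of_partition {N : ℕ} (P : Nat.Partition N) {j : ℕ} (hj : j ∈ P.parts) :
    j ≤ N := by
  rw [← P.parts_sum]
  exact Multiset.le_sum_of_mem hj

lemma Q_eq_zero {M N k : ℕ} (h : N < k) : Q M N k = 0 := by
  rw [Q, Finset.card_eq_zero, Finset.filter_eq_empty_iff]
  rintro P _ ⟨hk, -⟩
  exact absurd (hk ▸ card_le_of_partition P) (not_le.mpr h)

lemma Q_eq {M N : ℕ} (h : N ≤ M) (k : ℕ) : Q M N k = restrictedPartitionCount N k := by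
  rw [Q, restrictedPartitionCount]
  congr 1
  apply Finset.filter_congr
  intro P _
  simp only [and_iff_left_iff_imp]
  exact fun _ j hj => le_trans (parts_le_of_partition P hj) h

lemma Q_le (M N k : ℕ) : Q M N k ≤ restrictedPartitionCount N k := by
  apply Finset.card_le_card
  intro P hP
  simp only [Finset.mem_filter] at hP ⊢
  exact ⟨hP.1, hP.2.1⟩

variable {M : ℕ}

lemma A1 (f : Fin M → ℕ) :
    (∑ i : Fin M, Multiset.replicate (f i) ((i : ℕ) + 1)).sum
      = ∑ i : Fin M, ((i : ℕ) + 1) * f i := by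
  simp [Multiset.sum_sum, Multiset.sum_replicate, mul_comm]

lemma A2 (f : Fin M → ℕ) :
    Multiset.card (∑ i : Fin M, Multiset.replicate (f i) ((i : ℕ) + 1))
      = ∑ i : Fin M, f i := by
  rw [Multiset.card_sum]
  simp [Multiset.card_replicate]

lemma A3 (f : Fin M → ℕ) {a : ℕ}
    (ha : a ∈ ∑ i : Fin M, Multiset.replicate (f i) ((i : ℕ) + 1)) :
    0 < a ∧ a ≤ M := by
  rw [Multiset.mem_sum] at ha
  obtain ⟨i, -, hi⟩ := ha
  rw [Multiset.eq_of_mem_replicate hi]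
  exact ⟨Nat.succ_pos _, Nat.succ_le_of_lt i.isLt⟩

lemma A4 (f : Fin M → ℕ) (i : Fin M) :
    Multiset.count ((i : ℕ) + 1) (∑ j : Fin M, Multiset.replicate (f j) ((j : ℕ) + 1))
      = f i := by
  simp only [Multiset.count_sum', Multiset.count_replicate, add_left_inj]
  simp [Fin.val_inj, Finset.sum_ite_eq]

lemma A5 {m : Multiset ℕ} (hm : ∀ a ∈ m, 0 < a ∧ a ≤ M) :
    ∑ i : Fin M, Multiset.replicate (m.count ((i : ℕ) + 1)) ((i : ℕ) + 1) = m := by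
  have hinj : Function.Injective (fun i : Fin M => (i : ℕ) + 1) := by
    intro i j h; simpa [Fin.val_inj] using h
  have himg : ∀ a ∈ m, a ∈ Finset.univ.image (fun i : Fin M => (i : ℕ) + 1) := by
    intro a ha
    obtain ⟨h0, hM⟩ := hm a ha
    refine Finset.mem_image.mpr ⟨⟨a - 1, ?_⟩, Finset.mem_univ _, ?_⟩
    · omega
    · simp; omega
  calc ∑ i : Fin M, Multiset.replicate (m.count ((i : ℕ) + 1)) ((i : ℕ) + 1)
      = ∑ a ∈ Finset.univ.image (fun i : Fin M => (i : ℕ) + 1),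
          Multiset.replicate (m.count a) a := by
        rw [Finset.sum_image (fun i _ j _ h => hinj h)]
    _ = ∑ a ∈ m.toFinset, Multiset.replicate (m.count a) a := by
        apply (Finset.sum_subset ?_ ?_).symm
        · intro a ha; exact himg a (Multiset.mem_toFinset.mp ha)
        · intro a _ ha
          have : m.count a = 0 := Multiset.count_eq_zero_of_notMem
            (fun h => ha (Multiset.mem_toFinset.mpr h))
          simp [this]
    _ = m := by
        simp_rw [← Multiset.nsmul_singleton]
        exact Multiset.toFinset_sum_count_nsmul_eq m

/-- the fiber of `Φ M` over `(N, k)` is equivalent to the set of partitions of `N`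
into `k` parts all at most `M`. -/
def fiberEquiv (M N k : ℕ) : (Φ M ⁻¹' {((N : ℕ), (k : ℕ))}) ≃
    {P : Nat.Partition N // P.parts.card = k ∧ ∀ j ∈ P.parts, j ≤ M} where
  toFun f := by
    have hf : Φ M f.1 = (N, k) := f.2
    rw [Prod.ext_iff] at hf
    exact ⟨⟨∑ i : Fin M, Multiset.replicate (f.1 i) ((i : ℕ) + 1),
        fun {a} ha => (A3 f.1 ha).1,
        by rw [A1]; exact hf.1⟩,
      (A2 f.1).trans hf.2,
      fun j hj => (A3 f.1 hj).2⟩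
  invFun P := ⟨fun i => P.1.parts.count ((i : ℕ) + 1), by
    have hmem : ∀ a ∈ P.1.parts, 0 < a ∧ a ≤ M :=
      fun a ha => ⟨P.1.parts_pos ha, P.2.2 a ha⟩
    have h5 := A5 hmem
    have h1 := A1 (M := M) (fun i => P.1.parts.count ((i : ℕ) + 1))
    have h2 := A2 (M := M) (fun i => P.1.parts.count ((i : ℕ) + 1))
    rw [h5] at h1 h2
    simp only [Set.mem_preimage, Set.mem_singleton_iff, Φ, Prod.mk.injEq]
    exact ⟨by rw [← h1, P.1.parts_sum], by rw [← h2, P.2.1]⟩⟩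
  left_inv f := by
    apply Subtype.ext
    funext i
    exact A4 f.1 i
  right_inv P := by
    apply Subtype.ext
    apply Nat.Partition.ext
    exact A5 (fun a ha => ⟨P.1.parts_pos ha, P.2.2 a ha⟩)

variable {𝕜 : Type*} [NormedField 𝕜] [CompleteSpace 𝕜]

lemma keyA (x y : 𝕜) (hx : ‖x‖ < 1) (hy : ‖y‖ < 1) (M : ℕ) :
    HasSum (fun f : Fin M → ℕ => ∏ i : Fin M, (y * x ^ ((i : ℕ) + 1)) ^ (f i))
        (∏ i ∈ range M, (1 - y * x ^ ((i : ℕ) + 1))⁻¹)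
      ∧ Summable (fun f : Fin M → ℕ => ∏ i : Fin M, (‖y‖ * ‖x‖ ^ ((i : ℕ) + 1)) ^ (f i)) := by
  induction M with
  | zero =>
    constructor
    · simpa using (hasSum_fintype (fun f : Fin 0 → ℕ => (1 : 𝕜)))
    · simpa using (hasSum_fintype (fun f : Fin 0 → ℕ => (1 : ℝ))).summable
  | succ M ih =>
    obtain ⟨ihH, ihS⟩ := ih
    obtain ⟨z, hz_def⟩ : ∃ z : 𝕜, z = y * x ^ (M + 1) := ⟨_, rfl⟩
    obtain ⟨g, hg_def⟩ : ∃ g : (Fin M → ℕ) → 𝕜,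
        g = fun f => ∏ i : Fin M, (y * x ^ ((i : ℕ) + 1)) ^ (f i) := ⟨_, rfl⟩
    obtain ⟨gR, hgR_def⟩ : ∃ gR : (Fin M → ℕ) → ℝ,
        gR = fun f => ∏ i : Fin M, (‖y‖ * ‖x‖ ^ ((i : ℕ) + 1)) ^ (f i) := ⟨_, rfl⟩
    obtain ⟨P, hP_def⟩ : ∃ P : 𝕜, P = ∏ i ∈ range M, (1 - y * x ^ ((i : ℕ) + 1))⁻¹ := ⟨_, rfl⟩
    rw [← hg_def, ← hP_def] at ihH
    rw [← hgR_def] at ihS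
    have hzn : ‖z‖ = ‖y‖ * ‖x‖ ^ (M + 1) := by rw [hz_def, norm_mul, norm_pow]
    have hz : ‖z‖ < 1 := by
      rw [hzn]
      have h1 : ‖x‖ ^ (M + 1) ≤ 1 := pow_le_one₀ (norm_nonneg x) hx.le
      have := mul_le_of_le_one_right (norm_nonneg y) h1
      linarith
    have hgeom : HasSum (fun m : ℕ => z ^ m) (1 - z)⁻¹ :=
      hasSum_geometric_of_norm_lt_one hz
    have hngeom : Summable (fun m : ℕ => ‖z ^ m‖) := by
      simpa [norm_pow] using summable_geometric_of_lt_one (norm_nonneg z) hz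
    have hnorm : ∀ f : Fin M → ℕ, ‖g f‖ = gR f := by
      intro f; rw [hg_def, hgR_def]
      simp [norm_prod, norm_pow, norm_mul]
    have hSg : Summable (fun f : Fin M → ℕ => ‖g f‖) :=
      ihS.congr (fun f => (hnorm f).symm)
    have hprod : Summable (fun p : ℕ × (Fin M → ℕ) => z ^ p.1 * g p.2) :=
      summable_mul_of_summable_norm hngeom hSg
    have hmul : HasSum (fun p : ℕ × (Fin M → ℕ) => z ^ p.1 * g p.2) ((1 - z)⁻¹ * P) := by
      rw [hgeom.mul_eq ihH hprod.hasSum]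
      exact hprod.hasSum
    -- real version
    have hngeomR : Summable (fun m : ℕ => ‖(‖y‖ * ‖x‖ ^ (M + 1)) ^ m‖) := by
      rw [← hzn]
      simpa [abs_pow, abs_norm] using hngeom
    have hSgR : Summable (fun f : Fin M → ℕ => ‖gR f‖) := by
      apply ihS.congr
      intro f
      rw [← hnorm f, norm_norm]
    have hprodR : Summable (fun p : ℕ × (Fin M → ℕ) =>
        (‖y‖ * ‖x‖ ^ (M + 1)) ^ p.1 * gR p.2) :=
      summable_mul_of_summable_norm hngeomR hSgR
    -- transfer along the equivalence
    obtain ⟨e, he1, he2⟩ : ∃ e : ℕ × (Fin M → ℕ) ≃ (Fin (M + 1) → ℕ),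
        (∀ p : ℕ × (Fin M → ℕ), (e p) (Fin.last M) = p.1) ∧
        (∀ (p : ℕ × (Fin M → ℕ)) (i : Fin M), (e p) (Fin.castSucc i) = p.2 i) := by
      refine ⟨Fin.insertNthEquiv (fun _ => ℕ) (Fin.last M), fun p => ?_, fun p i => ?_⟩
      · simp [Fin.insertNthEquiv_apply]
      · simp only [Fin.insertNthEquiv_apply]
        rw [← Fin.succAbove_last]
        exact Fin.insertNth_apply_succAbove _ _ _ _
    have hfe : (fun F : Fin (M + 1) → ℕ =>
        ∏ i : Fin (M + 1), (y * x ^ ((i : ℕ) + 1)) ^ (F i)) ∘ e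
        = fun p : ℕ × (Fin M → ℕ) => z ^ p.1 * g p.2 := by
      funext p
      simp only [Function.comp_apply]
      rw [Fin.prod_univ_castSucc]
      rw [he1 p]
      have : ∀ i : Fin M, (e p) (Fin.castSucc i) = p.2 i := he2 p
      rw [Finset.prod_congr rfl (fun i _ => by rw [this i])]
      simp only [Fin.coe_castSucc, Fin.val_last]
      rw [hg_def, hz_def, mul_comm]
    have hfeR : (fun F : Fin (M + 1) → ℕ =>
        ∏ i : Fin (M + 1), (‖y‖ * ‖x‖ ^ ((i : ℕ) + 1)) ^ (F i)) ∘ e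
        = fun p : ℕ × (Fin M → ℕ) => (‖y‖ * ‖x‖ ^ (M + 1)) ^ p.1 * gR p.2 := by
      funext p
      simp only [Function.comp_apply]
      rw [Fin.prod_univ_castSucc]
      rw [he1 p]
      have : ∀ i : Fin M, (e p) (Fin.castSucc i) = p.2 i := he2 p
      rw [Finset.prod_congr rfl (fun i _ => by rw [this i])]
      simp only [Fin.coe_castSucc, Fin.val_last]
      rw [hgR_def, mul_comm]
    constructor
    · apply e.hasSum_iff.mp
      rw [hfe]
      convert hmul using 1
      rw [Finset.prod_range_succ, hP_def, hz_def, mul_comm]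
    · apply e.summable_iff.mp
      rw [hfeR]
      exact hprodR


lemma keyB (x y : 𝕜) (hx : ‖x‖ < 1) (hy : ‖y‖ < 1) (M : ℕ) :
    HasSum (fun c : ℕ × ℕ => (Q M c.1 c.2 : 𝕜) * x ^ c.1 * y ^ c.2)
      (∏ n ∈ Icc 1 M, (1 - y * x ^ n)⁻¹) := by
  have hA := (keyA x y hx hy M).1
  have hfun : ∀ f : Fin M → ℕ,
      ∏ i : Fin M, (y * x ^ ((i : ℕ) + 1)) ^ (f i) = x ^ (Φ M f).1 * y ^ (Φ M f).2 := by
    intro f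
    simp only [Φ]
    calc ∏ i : Fin M, (y * x ^ ((i : ℕ) + 1)) ^ (f i)
        = ∏ i : Fin M, (y ^ (f i) * x ^ (((i : ℕ) + 1) * f i)) := by
          refine Finset.prod_congr rfl fun i _ => ?_
          rw [mul_pow, pow_mul]
      _ = (∏ i : Fin M, y ^ (f i)) * ∏ i : Fin M, x ^ (((i : ℕ) + 1) * f i) :=
          Finset.prod_mul_distrib
      _ = y ^ (∑ i : Fin M, f i) * x ^ (∑ i : Fin M, ((i : ℕ) + 1) * f i) := by
          rw [Finset.prod_pow_eq_pow_sum, Finset.prod_pow_eq_pow_sum]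
      _ = _ := mul_comm _ _
  rw [funext hfun] at hA
  have hIcc : ∏ n ∈ Icc 1 M, (1 - y * x ^ n)⁻¹
      = ∏ i ∈ range M, (1 - y * x ^ ((i : ℕ) + 1))⁻¹ := by
    rw [← Finset.Ico_add_one_right_eq_Icc, Finset.prod_Ico_eq_prod_range]
    simp [add_comm]
  rw [hIcc]
  have hfib := hA.tsum_fiberwise (Φ M)
  have hval : ∀ c : ℕ × ℕ,
      (∑' f : Φ M ⁻¹' {c}, x ^ (Φ M (f : Fin M → ℕ)).1 * y ^ (Φ M (f : Fin M → ℕ)).2)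
        = (Q M c.1 c.2 : 𝕜) * x ^ c.1 * y ^ c.2 := by
    rintro ⟨N, k⟩
    haveI : Fintype (Φ M ⁻¹' {((N : ℕ), (k : ℕ))}) :=
      Fintype.ofEquiv _ (fiberEquiv M N k).symm
    rw [tsum_eq_sum (s := Finset.univ) (fun f hf => absurd (Finset.mem_univ f) hf)]
    have : ∀ f : Φ M ⁻¹' {((N : ℕ), (k : ℕ))},
        x ^ (Φ M (f : Fin M → ℕ)).1 * y ^ (Φ M (f : Fin M → ℕ)).2 = x ^ N * y ^ k := by
      rintro ⟨f, hf⟩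
      have : Φ M f = (N, k) := hf
      rw [this]
    rw [Finset.sum_congr rfl (fun f _ => this f), Finset.sum_const, Finset.card_univ]
    have hcard : Fintype.card (Φ M ⁻¹' {((N : ℕ), (k : ℕ))}) = Q M N k := by
      rw [Fintype.card_congr (fiberEquiv M N k), Q]
      convert Fintype.card_subtype _
    rw [hcard, nsmul_eq_mul, mul_assoc]
  rw [funext hval] at hfib
  exact hfib

lemma keyC (x y : 𝕜) (hx : ‖x‖ < 1) (hy : ‖y‖ < 1) (M : ℕ) :
    HasSum (fun N : ℕ => ∑ k ∈ range (N + 1), (Q M N k : 𝕜) * x ^ N * y ^ k)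
      (∏ n ∈ Icc 1 M, (1 - y * x ^ n)⁻¹) := by
  apply (keyB x y hx hy M).prod_fiberwise
  intro N
  apply hasSum_sum_of_ne_finset_zero (s := range (N + 1))
  intro k hk
  have : Q M N k = 0 := Q_eq_zero (by simpa using hk)
  simp [this]

lemma prod_le_C {r s : ℝ} (hr0 : 0 ≤ r) (hr : r < 1) (hs0 : 0 ≤ s) (hs : s < 1) (M : ℕ) :
    ∏ n ∈ Icc 1 M, (1 - s * r ^ n)⁻¹
      ≤ Real.exp (s * (1 - s * r)⁻¹ * (1 - r)⁻¹) := by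
  have hu : s * r < 1 := lt_of_le_of_lt (mul_le_of_le_one_right hs0 hr.le) hs
  have hu0 : 0 ≤ s * r := mul_nonneg hs0 hr0
  have h1u : 0 < 1 - s * r := by linarith
  have hv : ∀ n ∈ Icc 1 M, 0 ≤ s * r ^ n ∧ s * r ^ n ≤ s * r := by
    intro n hn
    have h1n : 1 ≤ n := (Finset.mem_Icc.mp hn).1
    have : r ^ n ≤ r ^ 1 := pow_le_pow_of_le_one hr0 hr.le h1n
    constructor
    · exact mul_nonneg hs0 (pow_nonneg hr0 n)
    · rw [pow_one] at this
      exact mul_le_mul_of_nonneg_left this hs0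
  calc ∏ n ∈ Icc 1 M, (1 - s * r ^ n)⁻¹
      ≤ ∏ n ∈ Icc 1 M, (1 + (s * r ^ n) * (1 - s * r)⁻¹) := by
        apply Finset.prod_le_prod
        · intro n hn
          have := hv n hn
          have h1v : 0 < 1 - s * r ^ n := by linarith
          positivity
        · intro n hn
          obtain ⟨h0, hle⟩ := hv n hn
          have h1v : 0 < 1 - s * r ^ n := by linarith
          rw [inv_eq_one_div, div_le_iff₀ h1v]
          have hinv : 0 < (1 - s * r)⁻¹ := inv_pos.mpr h1u
          have hid : (1 - s * r) * (1 - s * r)⁻¹ = 1 := mul_inv_cancel₀ (ne_of_gt h1u)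
          nlinarith [mul_le_mul_of_nonneg_right hle hinv.le]
    _ ≤ ∏ n ∈ Icc 1 M, Real.exp ((s * r ^ n) * (1 - s * r)⁻¹) := by
        apply Finset.prod_le_prod
        · intro n hn
          obtain ⟨h0, _⟩ := hv n hn
          positivity
        · intro n hn
          have := Real.add_one_le_exp ((s * r ^ n) * (1 - s * r)⁻¹)
          linarith
    _ = Real.exp (∑ n ∈ Icc 1 M, (s * r ^ n) * (1 - s * r)⁻¹) := (Real.exp_sum _ _).symm
    _ ≤ Real.exp (s * (1 - s * r)⁻¹ * (1 - r)⁻¹) := by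
        rw [Real.exp_le_exp]
        have : ∑ n ∈ Icc 1 M, (s * r ^ n) * (1 - s * r)⁻¹
            = (s * (1 - s * r)⁻¹) * ∑ n ∈ Icc 1 M, r ^ n := by
          rw [Finset.mul_sum]
          exact Finset.sum_congr rfl fun n _ => by ring
        rw [this]
        apply mul_le_mul_of_nonneg_left
        · calc ∑ n ∈ Icc 1 M, r ^ n
              ≤ ∑ n ∈ range (M + 1), r ^ n := by
                apply Finset.sum_le_sum_of_subset_of_nonneg
                · intro n hn
                  rw [Finset.mem_range]
                  exact Nat.lt_succ_of_le (Finset.mem_Icc.mp hn).2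
                · intro n _ _
                  exact pow_nonneg hr0 n
            _ ≤ ∑' n : ℕ, r ^ n := Summable.sum_le_tsum _ (fun n _ => pow_nonneg hr0 n)
                (summable_geometric_of_lt_one hr0 hr)
            _ = (1 - r)⁻¹ := tsum_geometric_of_lt_one hr0 hr
        · have hinv : 0 ≤ (1 - s * r)⁻¹ := (inv_pos.mpr h1u).le
          positivity

lemma summable_row {r s : ℝ} (hr0 : 0 ≤ r) (hr : r < 1) (hs0 : 0 ≤ s) (hs : s < 1) :
    Summable (fun N : ℕ =>
      ∑ k ∈ range (N + 1), (restrictedPartitionCount N k : ℝ) * r ^ N * s ^ k) := by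
  have hrn : ‖r‖ < 1 := by rwa [Real.norm_of_nonneg hr0]
  have hsn : ‖s‖ < 1 := by rwa [Real.norm_of_nonneg hs0]
  have hterm : ∀ (M N k : ℕ), (0 : ℝ) ≤ (Q M N k : ℝ) * r ^ N * s ^ k := by
    intro M N k
    have := pow_nonneg hr0 N
    have := pow_nonneg hs0 k
    positivity
  apply summable_of_sum_range_le (c := Real.exp (s * (1 - s * r)⁻¹ * (1 - r)⁻¹))
  · intro N
    apply Finset.sum_nonneg
    intro k _
    have := pow_nonneg hr0 N
    have := pow_nonneg hs0 k
    positivity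
  · intro T
    calc ∑ N ∈ range T, ∑ k ∈ range (N + 1), (restrictedPartitionCount N k : ℝ) * r ^ N * s ^ k
        = ∑ N ∈ range T, ∑ k ∈ range (N + 1), (Q T N k : ℝ) * r ^ N * s ^ k := by
          apply Finset.sum_congr rfl
          intro N hN
          apply Finset.sum_congr rfl
          intro k _
          rw [Q_eq (le_of_lt (Finset.mem_range.mp hN)) k]
      _ ≤ ∑' N : ℕ, ∑ k ∈ range (N + 1), (Q T N k : ℝ) * r ^ N * s ^ k := by
          apply Summable.sum_le_tsum (range T)
          · intro N _
            exact Finset.sum_nonneg fun k _ => hterm T N k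
          · exact (keyC r s hrn hsn T).summable
      _ = ∏ n ∈ Icc 1 T, (1 - s * r ^ n)⁻¹ := (keyC r s hrn hsn T).tsum_eq
      _ ≤ Real.exp (s * (1 - s * r)⁻¹ * (1 - r)⁻¹) := prod_le_C hr0 hr hs0 hs T

end PartGF


/-- For `|x| < 1` and `|y| < 1`, the double series `Σ_{N≥0} Σ_{k=0}^{N} λ(N|k) x^N y^k`
converges absolutely, and the partial products `∏_{n=1}^{M} (1 − y xⁿ)⁻¹` converge to its
sum as `M → ∞`. -/
theorem prod_inv_tendsto_sum_restrictedPartitionCount (x y : ℂ)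
    (hx : ‖x‖ < 1) (hy : ‖y‖ < 1) :
    Summable (fun N : ℕ => ∑ k ∈ Finset.range (N + 1),
        ‖(restrictedPartitionCount N k : ℂ) * x ^ N * y ^ k‖)
    ∧ Filter.Tendsto
        (fun M : ℕ => ∏ n ∈ Finset.Icc 1 M, (1 - y * x ^ n)⁻¹)
        Filter.atTop
        (nhds (∑' N : ℕ, ∑ k ∈ Finset.range (N + 1),
          (restrictedPartitionCount N k : ℂ) * x ^ N * y ^ k)) := by
  have hr0 : (0 : ℝ) ≤ ‖x‖ := norm_nonneg x
  have hs0 : (0 : ℝ) ≤ ‖y‖ := norm_nonneg y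
  have hb : Summable (fun N : ℕ =>
      ∑ k ∈ range (N + 1), (restrictedPartitionCount N k : ℝ) * ‖x‖ ^ N * ‖y‖ ^ k) :=
    PartGF.summable_row hr0 hx hs0 hy
  have hterm_norm : ∀ N k : ℕ, ‖(restrictedPartitionCount N k : ℂ) * x ^ N * y ^ k‖
      = (restrictedPartitionCount N k : ℝ) * ‖x‖ ^ N * ‖y‖ ^ k := by
    intro N k
    rw [norm_mul, norm_mul, norm_pow, norm_pow, Complex.norm_natCast]
  constructor
  · apply hb.congr
    intro N
    exact (Finset.sum_congr rfl fun k _ => (hterm_norm N k).symm)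
  · have hrow : ∀ M : ℕ, ∏ n ∈ Icc 1 M, (1 - y * x ^ n)⁻¹
        = ∑' N : ℕ, ∑ k ∈ range (N + 1), (PartGF.Q M N k : ℂ) * x ^ N * y ^ k :=
      fun M => (PartGF.keyC x y hx hy M).tsum_eq.symm
    rw [funext hrow]
    apply tendsto_tsum_of_dominated_convergence hb
    · intro N
      apply Filter.Tendsto.congr' _ tendsto_const_nhds
      filter_upwards [Filter.eventually_ge_atTop N] with M hM
      exact Finset.sum_congr rfl fun k _ => by rw [PartGF.Q_eq hM k]
    · apply Filter.Eventually.of_forall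
      intro M N
      calc ‖∑ k ∈ range (N + 1), (PartGF.Q M N k : ℂ) * x ^ N * y ^ k‖
          ≤ ∑ k ∈ range (N + 1), ‖(PartGF.Q M N k : ℂ) * x ^ N * y ^ k‖ :=
            norm_sum_le _ _
        _ ≤ ∑ k ∈ range (N + 1), (restrictedPartitionCount N k : ℝ) * ‖x‖ ^ N * ‖y‖ ^ k := by
            apply Finset.sum_le_sum
            intro k _
            rw [norm_mul, norm_mul, norm_pow, norm_pow, Complex.norm_natCast]
            have hQ : (PartGF.Q M N k : ℝ) ≤ (restrictedPartitionCount N k : ℝ) :=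
              Nat.cast_le.mpr (PartGF.Q_le M N k)
            have h1 := pow_nonneg hr0 N
            have h2 := pow_nonneg hs0 k
            have := mul_le_mul_of_nonneg_right hQ h1
            exact mul_le_mul_of_nonneg_right this h2
end
end
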